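/- arXiv:2504.20704 — 2 statements merged into one kernel-verified Lean document; each statement's English description precedes it below -/
import Mathlib

section
/- Let c : ℕ → ℝ be any function with c(n) → ∞ as n → ∞, and let G be an Erdős–Rényi random bipartite graph drawn from G(n, n, p) with p = (log n + c(n))/n (where p is truncated to [0,1] if necessary). Then the probability that G contains a perfect matching tends to 1 as n → ∞. -/
open MeasureTheory Filter

/-- The Erdős–Rényi random bipartite graph `G(n_L, n_R, p)`, as the product Bernoulli
measure on functions assigning to each (left, right) pair whether it is an edge. -/
noncomputable def bipartiteER (nL nR : ℕ) (p : ENNReal) (hp : p ≤ 1) :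
    Measure (Fin nL × Fin nR → Bool) :=
  Measure.pi fun _ => (PMF.bernoulli p.toNNReal
    (by simpa using ENNReal.toNNReal_mono ENNReal.one_ne_top hp)).toMeasure

namespace ERPM

lemma measurableSet_all {nL nR : ℕ} (s : Set (Fin nL × Fin nR → Bool)) : MeasurableSet s :=
  s.toFinite.measurableSet

instance instProb {nL nR : ℕ} (p : ENNReal) (hp : p ≤ 1) :
    IsProbabilityMeasure (bipartiteER nL nR p hp) := by
  unfold bipartiteER; infer_instance

lemma bern_true {p : ENNReal} {hp : p ≤ 1} :
    (PMF.bernoulli p.toNNReal (by simpa using ENNReal.toNNReal_mono ENNReal.one_ne_top hp)).toMeasure {true} = p := by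
  rw [PMF.toMeasure_apply_singleton _ _ (measurableSet_singleton _)]
  generalize_proofs h'
  simp [PMF.bernoulli_apply, ENNReal.coe_toNNReal (ne_top_of_le_ne_top ENNReal.one_ne_top hp)]

lemma bern_false {p : ENNReal} {hp : p ≤ 1} :
    (PMF.bernoulli p.toNNReal (by simpa using ENNReal.toNNReal_mono ENNReal.one_ne_top hp)).toMeasure {false} = 1 - p := by
  rw [PMF.toMeasure_apply_singleton _ _ (measurableSet_singleton _)]
  generalize_proofs h'
  simp [PMF.bernoulli_apply, ENNReal.coe_sub,
    ENNReal.coe_toNNReal (ne_top_of_le_ne_top ENNReal.one_ne_top hp)]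

lemma box_measure {nL nR : ℕ} (p : ENNReal) (hp : p ≤ 1)
    (Fls Tr : Finset (Fin nL × Fin nR)) (hd : Disjoint Fls Tr) :
    bipartiteER nL nR p hp
      {G | (∀ q ∈ Fls, G q = false) ∧ ∀ q ∈ Tr, G q = true}
      = (1 - p) ^ Fls.card * p ^ Tr.card := by
  classical
  set s : Fin nL × Fin nR → Set Bool := fun q =>
    if q ∈ Tr then {true} else if q ∈ Fls then {false} else Set.univ with hs
  have hset : {G : Fin nL × Fin nR → Bool | (∀ q ∈ Fls, G q = false) ∧ ∀ q ∈ Tr, G q = true}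
      = Set.univ.pi s := by
    ext G
    simp only [Set.mem_setOf_eq, Set.mem_pi, Set.mem_univ, forall_true_left, hs]
    constructor
    · rintro ⟨h1, h2⟩ q
      split_ifs with h h'
      · exact h2 q h
      · exact h1 q h'
      · trivial
    · intro h
      constructor
      · intro q hq
        have := h q
        rw [if_neg (fun hmem => (Finset.disjoint_left.mp hd hq) hmem), if_pos hq] at this
        exact this
      · intro q hq
        have := h q
        rw [if_pos hq] at this
        exact this
  rw [hset]
  unfold bipartiteER
  rw [MeasureTheory.Measure.pi_pi]
  have key : ∀ q : Fin nL × Fin nR, (PMF.bernoulli p.toNNReal (by simpa using ENNReal.toNNReal_mono ENNReal.one_ne_top hp)).toMeasure (s q)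
      = if q ∈ Tr then p else if q ∈ Fls then 1 - p else 1 := by
    intro q
    simp only [hs]
    split_ifs with h h'
    · exact bern_true (hp := hp)
    · exact bern_false (hp := hp)
    · exact measure_univ
  calc ∏ q : Fin nL × Fin nR, (PMF.bernoulli p.toNNReal (by simpa using ENNReal.toNNReal_mono ENNReal.one_ne_top hp)).toMeasure (s q)
      = ∏ q ∈ Tr ∪ Fls, (PMF.bernoulli p.toNNReal (by simpa using ENNReal.toNNReal_mono ENNReal.one_ne_top hp)).toMeasure (s q) := by
        refine (Finset.prod_subset (Finset.subset_univ _) ?_).symm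
        intro q _ hq
        rw [Finset.mem_union] at hq
        push_neg at hq
        rw [key, if_neg hq.1, if_neg hq.2]
    _ = (∏ q ∈ Tr, (PMF.bernoulli p.toNNReal (by simpa using ENNReal.toNNReal_mono ENNReal.one_ne_top hp)).toMeasure (s q)) *
        ∏ q ∈ Fls, (PMF.bernoulli p.toNNReal (by simpa using ENNReal.toNNReal_mono ENNReal.one_ne_top hp)).toMeasure (s q) := Finset.prod_union hd.symm
    _ = p ^ Tr.card * (1 - p) ^ Fls.card := by
        have h1 : ∀ q ∈ Tr, (PMF.bernoulli p.toNNReal (by simpa using ENNReal.toNNReal_mono ENNReal.one_ne_top hp)).toMeasure (s q) = p := fun q hq => by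
          rw [key, if_pos hq]
        have h2 : ∀ q ∈ Fls, (PMF.bernoulli p.toNNReal (by simpa using ENNReal.toNNReal_mono ENNReal.one_ne_top hp)).toMeasure (s q) = 1 - p := fun q hq => by
          rw [key, if_neg (fun hmem => Finset.disjoint_left.mp hd hq hmem), if_pos hq]
        rw [Finset.prod_congr rfl h1, Finset.prod_congr rfl h2, Finset.prod_const,
          Finset.prod_const]
    _ = (1 - p) ^ Fls.card * p ^ Tr.card := mul_comm _ _


variable {n : ℕ}

def nbr (H : Fin n × Fin n → Bool) (S : Finset (Fin n)) : Finset (Fin n) :=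
  S.biUnion fun i => Finset.univ.filter fun j => H (i, j) = true

lemma mem_nbr {H : Fin n × Fin n → Bool} {S : Finset (Fin n)} {j : Fin n} :
    j ∈ nbr H S ↔ ∃ i ∈ S, H (i, j) = true := by
  simp [nbr]

lemma nbr_mono {H : Fin n × Fin n → Bool} {S S' : Finset (Fin n)} (h : S' ⊆ S) :
    nbr H S' ⊆ nbr H S := by
  intro j hj
  rw [mem_nbr] at *
  obtain ⟨i, hi, hij⟩ := hj
  exact ⟨i, h hi, hij⟩

structure Wit (H : Fin n × Fin n → Bool) (S T : Finset (Fin n)) : Prop where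
  card_pos : 1 ≤ S.card
  card_le : 2 * S.card ≤ n + 1
  cardT : T.card = S.card - 1
  no_edge : ∀ s ∈ S, ∀ t, t ∉ T → H (s, t) = false
  deg2 : ∀ t ∈ T, ∃ s₁ ∈ S, ∃ s₂ ∈ S, s₁ ≠ s₂ ∧ H (s₁, t) = true ∧ H (s₂, t) = true

lemma exists_good_of_violating (H : Fin n × Fin n → Bool) (A : Finset (Fin n))
    (hA : (nbr H A).card < A.card) :
    ∃ S : Finset (Fin n), S.card ≤ A.card ∧ 1 ≤ S.card ∧
      (nbr H S).card = S.card - 1 ∧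
      (∀ t ∈ nbr H S, ∃ s₁ ∈ S, ∃ s₂ ∈ S, s₁ ≠ s₂ ∧ H (s₁, t) = true ∧ H (s₂, t) = true) := by
  classical
  set V : Finset (Finset (Fin n)) :=
    Finset.univ.filter (fun B => (nbr H B).card < B.card) with hV
  have hmemV : ∀ B : Finset (Fin n), B ∈ V ↔ (nbr H B).card < B.card := by
    intro B; simp [hV]
  obtain ⟨S, hSV, hSmin⟩ := Finset.exists_min_image V Finset.card ⟨A, (hmemV A).mpr hA⟩
  have hSlt : (nbr H S).card < S.card := (hmemV S).mp hSV
  have hpos : 1 ≤ S.card := by omega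
  refine ⟨S, hSmin A ((hmemV A).mpr hA), hpos, ?_, ?_⟩
  · -- card equality by minimality
    by_contra hne
    have hlt : (nbr H S).card < S.card - 1 := by omega
    obtain ⟨x, hx⟩ := Finset.card_pos.mp (by omega : 0 < S.card)
    have hsub : S.erase x ⊆ S := Finset.erase_subset _ _
    have : (nbr H (S.erase x)).card < (S.erase x).card := by
      have h1 := Finset.card_le_card (nbr_mono (H := H) hsub)
      have h2 : (S.erase x).card = S.card - 1 := Finset.card_erase_of_mem hx
      omega
    have := hSmin _ ((hmemV _).mpr this)
    have h2 : (S.erase x).card = S.card - 1 := Finset.card_erase_of_mem hx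
    omega
  · -- degree two property
    intro t ht
    by_contra hcon
    push_neg at hcon
    -- the set of neighbors of t in S has card ≤ 1
    have hfil : ∀ s₁ ∈ S.filter (fun s => H (s, t) = true),
        ∀ s₂ ∈ S.filter (fun s => H (s, t) = true), s₁ = s₂ := by
      intro s₁ h₁ s₂ h₂
      rw [Finset.mem_filter] at h₁ h₂
      by_contra hne
      exact absurd (h₂.2) (hcon s₁ h₁.1 s₂ h₂.1 hne h₁.2)
    obtain ⟨s₀, hs₀S, hs₀⟩ := mem_nbr.mp ht
    have hs₀mem : s₀ ∈ S.filter (fun s => H (s, t) = true) := by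
      rw [Finset.mem_filter]; exact ⟨hs₀S, hs₀⟩
    have hsub : nbr H (S.erase s₀) ⊆ (nbr H S).erase t := by
      intro j hj
      obtain ⟨i, hi, hij⟩ := mem_nbr.mp hj
      rw [Finset.mem_erase] at hi ⊢
      refine ⟨?_, mem_nbr.mpr ⟨i, hi.2, hij⟩⟩
      intro hjt
      subst hjt
      exact hi.1 (hfil i (by rw [Finset.mem_filter]; exact ⟨hi.2, hij⟩) s₀ hs₀mem)
    have hcard : (nbr H (S.erase s₀)).card ≤ (nbr H S).card - 1 := by
      have := Finset.card_le_card hsub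
      have := Finset.card_erase_of_mem (mem_nbr.mpr ⟨s₀, hs₀S, hs₀⟩ : t ∈ nbr H S)
      omega
    have hnbrpos : 1 ≤ (nbr H S).card := Finset.card_pos.mpr ⟨t, ht⟩
    have hviol : (nbr H (S.erase s₀)).card < (S.erase s₀).card := by
      have h2 : (S.erase s₀).card = S.card - 1 := Finset.card_erase_of_mem hs₀S
      omega
    have := hSmin _ ((hmemV _).mpr hviol)
    have h2 : (S.erase s₀).card = S.card - 1 := Finset.card_erase_of_mem hs₀S
    omega

lemma witness_of_noPM0 (H : Fin n × Fin n → Bool)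
    (h : ¬∃ σ : Equiv.Perm (Fin n), ∀ i, H (i, σ i) = true) :
    ∃ S T : Finset (Fin n), Wit H S T ∨ Wit (fun q => H (q.2, q.1)) S T := by
  classical
  -- Hall's condition fails
  have hall : ¬∀ s : Finset (Fin n), s.card ≤ (s.biUnion
      (fun i => Finset.univ.filter fun j => H (i, j) = true)).card := by
    intro hcon
    obtain ⟨f, hfinj, hf⟩ :=
      (Finset.all_card_le_biUnion_card_iff_exists_injective _).mp hcon
    refine h ⟨Equiv.ofBijective f ((Finite.injective_iff_bijective).mp hfinj), fun i => ?_⟩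
    have := hf i
    rw [Finset.mem_filter] at this
    exact this.2
  push_neg at hall
  obtain ⟨A, hA⟩ := hall
  have hA' : (nbr H A).card < A.card := hA
  obtain ⟨S, _, hpos, hcard, hdeg⟩ := exists_good_of_violating H A hA'
  have hSn : S.card ≤ n := by
    have := Finset.card_le_card (Finset.subset_univ S)
    simpa using this
  by_cases hsize : 2 * S.card ≤ n + 1
  · refine ⟨S, nbr H S, Or.inl ⟨hpos, hsize, hcard, ?_, hdeg⟩⟩
    intro s hs t hts
    by_contra hcon
    exact hts (mem_nbr.mpr ⟨s, hs, by simpa using hcon⟩)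
  · -- flip sides
    set Ht : Fin n × Fin n → Bool := fun q => H (q.2, q.1) with hHt
    set T' : Finset (Fin n) := Finset.univ \ nbr H S with hT'
    have hT'card : T'.card = n - (S.card - 1) := by
      rw [hT', Finset.card_sdiff_of_subset (Finset.subset_univ _), hcard]
      simp
    have hnbrT' : nbr Ht T' ⊆ Finset.univ \ S := by
      intro j hj
      obtain ⟨t, htT', hedge⟩ := mem_nbr.mp hj
      rw [Finset.mem_sdiff]
      refine ⟨Finset.mem_univ _, fun hjS => ?_⟩
      rw [hT', Finset.mem_sdiff] at htT'
      exact htT'.2 (mem_nbr.mpr ⟨j, hjS, hedge⟩)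
    have hviol : (nbr Ht T').card < T'.card := by
      have h1 := Finset.card_le_card hnbrT'
      have h2 : (Finset.univ \ S).card = n - S.card := by
        rw [Finset.card_sdiff_of_subset (Finset.subset_univ _)]
        simp
      omega
    obtain ⟨S', hS'le, hpos', hcard', hdeg'⟩ := exists_good_of_violating Ht T' hviol
    refine ⟨S', nbr Ht S', Or.inr ⟨hpos', by omega, hcard', ?_, hdeg'⟩⟩
    intro s hs t hts
    by_contra hcon
    exact hts (mem_nbr.mpr ⟨s, hs, by simpa using hcon⟩)
def ρ (b : Bool) (q : Fin n × Fin n) : Fin n × Fin n := if b then q.swap else q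

lemma ρ_inj (b : Bool) : Function.Injective (ρ (n := n) b) := by
  cases b
  · exact fun a b h => h
  · exact fun a b h => Prod.swap_injective h

def trPairs (T : Finset (Fin n)) (f g : Fin n → Fin n) : Finset (Fin n × Fin n) :=
  T.biUnion fun t => {(f t, t), (g t, t)}

lemma snd_mem_of_mem_trPairs {T : Finset (Fin n)} {f g : Fin n → Fin n}
    {q : Fin n × Fin n} (h : q ∈ trPairs T f g) : q.2 ∈ T := by
  classical
  rw [trPairs, Finset.mem_biUnion] at h
  obtain ⟨t, ht, hq⟩ := h
  rw [Finset.mem_insert, Finset.mem_singleton] at hq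
  rcases hq with h | h <;> rw [h] <;> exact ht


lemma witness_of_noPM (H : Fin n × Fin n → Bool)
    (h : ¬∃ σ : Equiv.Perm (Fin n), ∀ i, H (i, σ i) = true) :
    ∃ b : Bool, ∃ S T : Finset (Fin n), Wit (fun q => H (ρ b q)) S T := by
  obtain ⟨S, T, hw | hw⟩ := witness_of_noPM0 H h
  · exact ⟨false, S, T, hw⟩
  · exact ⟨true, S, T, hw⟩

open Finset in
def boxEv (b : Bool) (S T : Finset (Fin n)) (f g : Fin n → Fin n) :
    Set (Fin n × Fin n → Bool) :=
  if ∀ t ∈ T, f t ≠ g t then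
    {G | (∀ q ∈ (S ×ˢ Tᶜ).image (ρ b), G q = false) ∧
      ∀ q ∈ (trPairs T f g).image (ρ b), G q = true}
  else ∅

open Finset in
lemma boxEv_measure_le (p : ENNReal) (hp : p ≤ 1) {k : ℕ}
    (b : Bool) (S T : Finset (Fin n)) (f g : Fin n → Fin n)
    (hS : S.card = k) (hT : T.card = k - 1) :
    bipartiteER n n p hp (boxEv b S T f g)
      ≤ (1 - p) ^ (k * (n - (k - 1))) * p ^ (2 * (k - 1)) := by
  classical
  unfold boxEv
  split_ifs with hfg
  · have hdis0 : Disjoint (S ×ˢ Tᶜ) (trPairs T f g) := by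
      rw [Finset.disjoint_left]
      intro q hq hq2
      rw [Finset.mem_product, Finset.mem_compl] at hq
      exact hq.2 (snd_mem_of_mem_trPairs hq2)
    have hdis : Disjoint ((S ×ˢ Tᶜ).image (ρ b)) ((trPairs T f g).image (ρ b)) :=
      (Finset.disjoint_image (ρ_inj b)).mpr hdis0
    rw [box_measure p hp _ _ hdis]
    have hc1 : ((S ×ˢ Tᶜ).image (ρ b)).card = k * (n - (k - 1)) := by
      rw [Finset.card_image_of_injective _ (ρ_inj b), Finset.card_product,
        Finset.card_compl, hS, hT]
      simp
    have hc2 : ((trPairs T f g).image (ρ b)).card = 2 * (k - 1) := by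
      rw [Finset.card_image_of_injective _ (ρ_inj b), trPairs, Finset.card_biUnion, ← hT]
      · rw [Finset.sum_congr rfl (fun t ht => ?_), Finset.sum_const, smul_eq_mul, mul_comm]
        rw [Finset.card_insert_of_notMem, Finset.card_singleton]
        rw [Finset.mem_singleton]
        intro hcon
        exact hfg t ht (congrArg Prod.fst hcon)
      · intro x hx y hy hxy
        rw [Function.onFun, Finset.disjoint_left]
        intro q hq hq2
        rw [Finset.mem_insert, Finset.mem_singleton] at hq hq2
        apply hxy
        rcases hq with h | h <;> rcases hq2 with h2 | h2 <;>
          (rw [h] at h2; exact congrArg Prod.snd h2)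
    rw [hc1, hc2]
  · simp

open Finset in
lemma noPM_subset_boxes :
    {G : Fin n × Fin n → Bool | ¬∃ σ : Equiv.Perm (Fin n), ∀ i, G (i, σ i) = true} ⊆
      ⋃ b ∈ (Finset.univ : Finset Bool), ⋃ k ∈ Finset.Icc 1 ((n+1)/2),
      ⋃ S ∈ Finset.powersetCard k (univ : Finset (Fin n)),
      ⋃ T ∈ Finset.powersetCard (k-1) (univ : Finset (Fin n)),
      ⋃ f ∈ Fintype.piFinset (fun j => if j ∈ T then S else {j}),
      ⋃ g ∈ Fintype.piFinset (fun j => if j ∈ T then S else {j}),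
        boxEv b S T f g := by
  classical
  intro G hG
  obtain ⟨b, S, T, w⟩ := witness_of_noPM G hG
  set H : Fin n × Fin n → Bool := fun q => G (ρ b q) with hH
  have hch : ∀ t : Fin n, ∃ pq : Fin n × Fin n,
      (t ∈ T → (pq.1 ∈ S ∧ pq.2 ∈ S ∧ pq.1 ≠ pq.2 ∧
        H (pq.1, t) = true ∧ H (pq.2, t) = true)) ∧ (t ∉ T → pq = (t, t)) := by
    intro t
    by_cases ht : t ∈ T
    · obtain ⟨s₁, hs₁, s₂, hs₂, hne, h1, h2⟩ := w.deg2 t ht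
      exact ⟨(s₁, s₂), fun _ => ⟨hs₁, hs₂, hne, h1, h2⟩, fun h => absurd ht h⟩
    · exact ⟨(t, t), fun h => absurd h ht, fun _ => rfl⟩
  choose F hF hF' using hch
  set f : Fin n → Fin n := fun t => (F t).1 with hf
  set g : Fin n → Fin n := fun t => (F t).2 with hg
  have hfg : ∀ t ∈ T, f t ≠ g t := fun t ht => (hF t ht).2.2.1
  simp only [Set.mem_iUnion]
  refine ⟨b, Finset.mem_univ b, S.card, ?_, S, ?_, T, ?_, f, ?_, g, ?_, ?_⟩
  · rw [Finset.mem_Icc]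
    have := w.card_le
    exact ⟨w.card_pos, by omega⟩
  · rw [Finset.mem_powersetCard_univ]
  · rw [Finset.mem_powersetCard_univ]; exact w.cardT
  · rw [Fintype.mem_piFinset]
    intro j
    by_cases hj : j ∈ T
    · rw [if_pos hj]; exact (hF j hj).1
    · rw [if_neg hj, Finset.mem_singleton]
      show (F j).1 = j
      rw [hF' j hj]
  · rw [Fintype.mem_piFinset]
    intro j
    by_cases hj : j ∈ T
    · rw [if_pos hj]; exact (hF j hj).2.1
    · rw [if_neg hj, Finset.mem_singleton]
      show (F j).2 = j
      rw [hF' j hj]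
  · unfold boxEv
    rw [if_pos hfg]
    constructor
    · intro q hq
      rw [Finset.mem_image] at hq
      obtain ⟨q', hq', rfl⟩ := hq
      rw [Finset.mem_product, Finset.mem_compl] at hq'
      have := w.no_edge q'.1 hq'.1 q'.2 hq'.2
      exact this
    · intro q hq
      rw [Finset.mem_image] at hq
      obtain ⟨q', hq', rfl⟩ := hq
      rw [trPairs, Finset.mem_biUnion] at hq'
      obtain ⟨t, ht, hq'⟩ := hq'
      rw [Finset.mem_insert, Finset.mem_singleton] at hq'
      rcases hq' with h | h <;> subst h
      · exact (hF t ht).2.2.2.1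
      · exact (hF t ht).2.2.2.2

open Finset in
lemma measure_noPM_le (p : ENNReal) (hp : p ≤ 1) :
    bipartiteER n n p hp
      {G | ¬∃ σ : Equiv.Perm (Fin n), ∀ i, G (i, σ i) = true} ≤
    2 * ∑ k ∈ Finset.Icc 1 ((n+1)/2),
      (n.choose k : ENNReal) * (n.choose (k-1)) * ((k : ENNReal) ^ (k-1))^2
        * ((1 - p) ^ (k * (n - (k - 1))) * p ^ (2 * (k - 1))) := by
  classical
  set W : ℕ → ENNReal := fun k => (1 - p) ^ (k * (n - (k - 1))) * p ^ (2 * (k - 1)) with hW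
  refine le_trans (measure_mono noPM_subset_boxes) ?_
  refine le_trans (measure_biUnion_finset_le _ _) ?_
  have hinner : ∀ b : Bool,
      bipartiteER n n p hp (⋃ k ∈ Finset.Icc 1 ((n+1)/2),
        ⋃ S ∈ Finset.powersetCard k (univ : Finset (Fin n)),
        ⋃ T ∈ Finset.powersetCard (k-1) (univ : Finset (Fin n)),
        ⋃ f ∈ Fintype.piFinset (fun j => if j ∈ T then S else {j}),
        ⋃ g ∈ Fintype.piFinset (fun j => if j ∈ T then S else {j}), boxEv b S T f g)
      ≤ ∑ k ∈ Finset.Icc 1 ((n+1)/2),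
        (n.choose k : ENNReal) * (n.choose (k-1)) * ((k : ENNReal) ^ (k-1))^2 * W k := by
    intro b
    refine le_trans (measure_biUnion_finset_le _ _) (Finset.sum_le_sum fun k hk => ?_)
    rw [Finset.mem_Icc] at hk
    refine le_trans (measure_biUnion_finset_le _ _) ?_
    have hSstep : ∀ S ∈ Finset.powersetCard k (univ : Finset (Fin n)),
        bipartiteER n n p hp (⋃ T ∈ Finset.powersetCard (k-1) (univ : Finset (Fin n)),
          ⋃ f ∈ Fintype.piFinset (fun j => if j ∈ T then S else {j}),
          ⋃ g ∈ Fintype.piFinset (fun j => if j ∈ T then S else {j}), boxEv b S T f g)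
        ≤ (n.choose (k-1) : ENNReal) * (((k : ENNReal) ^ (k-1))^2 * W k) := by
      intro S hS
      rw [Finset.mem_powersetCard_univ] at hS
      refine le_trans (measure_biUnion_finset_le _ _) ?_
      have hTstep : ∀ T ∈ Finset.powersetCard (k-1) (univ : Finset (Fin n)),
          bipartiteER n n p hp (⋃ f ∈ Fintype.piFinset (fun j => if j ∈ T then S else {j}),
            ⋃ g ∈ Fintype.piFinset (fun j => if j ∈ T then S else {j}), boxEv b S T f g)
          ≤ ((k : ENNReal) ^ (k-1))^2 * W k := by
        intro T hT
        rw [Finset.mem_powersetCard_univ] at hT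
        have hcard : (Fintype.piFinset (fun j => if j ∈ T then S else {j})).card
            = k ^ (k-1) := by
          rw [Fintype.card_piFinset]
          have : ∀ j : Fin n, (if j ∈ T then S else {j}).card = if j ∈ T then k else 1 := by
            intro j; split_ifs with h
            · exact hS
            · exact Finset.card_singleton j
          rw [Finset.prod_congr rfl (fun j _ => this j)]
          have := Finset.prod_ite_mem (Finset.univ : Finset (Fin n)) T (fun _ => (k : ℕ))
          rw [Finset.univ_inter] at this
          rw [this, Finset.prod_const, hT]
        refine le_trans (measure_biUnion_finset_le _ _) ?_
        have hgstep : ∀ f ∈ Fintype.piFinset (fun j => if j ∈ T then S else {j}),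
            bipartiteER n n p hp
              (⋃ g ∈ Fintype.piFinset (fun j => if j ∈ T then S else {j}), boxEv b S T f g)
            ≤ (k : ENNReal) ^ (k-1) * W k := by
          intro f hf
          refine le_trans (measure_biUnion_finset_le _ _) ?_
          refine le_trans (Finset.sum_le_sum fun g hg =>
            boxEv_measure_le p hp b S T f g hS hT) ?_
          rw [Finset.sum_const, hcard, nsmul_eq_mul, Nat.cast_pow]
        refine le_trans (Finset.sum_le_sum hgstep) ?_
        rw [Finset.sum_const, hcard, nsmul_eq_mul, Nat.cast_pow, sq, mul_assoc]
      refine le_trans (Finset.sum_le_sum hTstep) ?_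
      rw [Finset.sum_const, Finset.card_powersetCard, Finset.card_univ, Fintype.card_fin,
        nsmul_eq_mul]
    refine le_trans (Finset.sum_le_sum hSstep) ?_
    rw [Finset.sum_const, Finset.card_powersetCard, Finset.card_univ, Fintype.card_fin,
      nsmul_eq_mul]
    ring_nf
    exact le_refl _
  refine le_trans (Finset.sum_le_sum fun b _ => hinner b) ?_
  rw [Finset.sum_const, Finset.card_univ, Fintype.card_bool, nsmul_eq_mul, Nat.cast_ofNat]

lemma succ_pow_le_exp_mul (m : ℕ) :
    ((m : ℝ) + 1) ^ m ≤ Real.exp 1 * (m : ℝ) ^ m := by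
  rcases Nat.eq_zero_or_pos m with h | h
  · subst h; simp [Real.one_le_exp]
  · have hm : (0:ℝ) < m := by positivity
    have h1 : (m : ℝ) + 1 ≤ m * Real.exp (1/m) := by
      have := Real.add_one_le_exp (1/(m:ℝ))
      calc (m:ℝ) + 1 = m * (1/m + 1) := by field_simp; ring
        _ ≤ m * Real.exp (1/m) := by nlinarith
    calc ((m:ℝ)+1)^m ≤ (m * Real.exp (1/m))^m := by
          apply pow_le_pow_left₀ (by positivity) h1
      _ = (m:ℝ)^m * Real.exp (1/m)^m := mul_pow _ _ _
      _ = (m:ℝ)^m * Real.exp 1 := by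
          rw [← Real.exp_nat_mul]
          congr 1
          field_simp
      _ = Real.exp 1 * (m:ℝ)^m := mul_comm _ _

lemma pow_self_le_exp_mul_factorial (m : ℕ) :
    (m : ℝ) ^ m ≤ Real.exp 1 ^ m * m.factorial := by
  induction m with
  | zero => simp
  | succ m ih =>
    have h1 : ((m:ℝ)+1)^m ≤ Real.exp 1 * (m:ℝ)^m := succ_pow_le_exp_mul m
    have hfac : ((m+1 : ℕ).factorial : ℝ) = (m+1) * m.factorial := by
      push_cast [Nat.factorial_succ]; ring
    have hexp : (0:ℝ) < Real.exp 1 := Real.exp_pos 1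
    have hmf : (0:ℝ) ≤ (m:ℝ)+1 := by positivity
    calc ((m+1:ℕ):ℝ)^(m+1) = ((m:ℝ)+1)^m * ((m:ℝ)+1) := by push_cast; ring
      _ ≤ (Real.exp 1 * (m:ℝ)^m) * ((m:ℝ)+1) := by
          apply mul_le_mul_of_nonneg_right h1 hmf
      _ ≤ (Real.exp 1 * (Real.exp 1 ^ m * m.factorial)) * ((m:ℝ)+1) := by
          apply mul_le_mul_of_nonneg_right _ hmf
          apply mul_le_mul_of_nonneg_left ih (le_of_lt hexp)
      _ = Real.exp 1 ^ (m+1) * ((m+1 : ℕ).factorial : ℝ) := by rw [hfac]; ring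

lemma choose_mul_le (n k : ℕ) :
    (n.choose k : ℝ) * (k : ℝ) ^ k ≤ Real.exp 1 ^ k * (n : ℝ) ^ k := by
  have h1 : (n.choose k : ℝ) * (k : ℝ)^k ≤ (n.choose k : ℝ) * (Real.exp 1 ^ k * k.factorial) :=
    mul_le_mul_of_nonneg_left (pow_self_le_exp_mul_factorial k) (by positivity)
  have h2 : (n.choose k : ℝ) * k.factorial ≤ (n:ℝ)^k := by
    have := Nat.descFactorial_le_pow n k
    have h3 : n.descFactorial k = n.choose k * k.factorial := by
      rw [Nat.descFactorial_eq_factorial_mul_choose]; ring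
    calc (n.choose k : ℝ) * k.factorial = (n.descFactorial k : ℝ) := by
          rw [h3]; push_cast; ring
      _ ≤ (n:ℝ)^k := by exact_mod_cast this
  calc (n.choose k : ℝ) * (k : ℝ)^k ≤ (n.choose k : ℝ) * (Real.exp 1 ^ k * k.factorial) := h1
    _ = Real.exp 1 ^ k * ((n.choose k : ℝ) * k.factorial) := by ring
    _ ≤ Real.exp 1 ^ k * (n:ℝ)^k := by
        apply mul_le_mul_of_nonneg_left h2 (by positivity)

lemma count_bound {n k : ℕ} (hk : 1 ≤ k) :
    (n.choose k : ℝ) * (n.choose (k-1)) * ((k : ℝ) ^ (k-1))^2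
      ≤ Real.exp 1 ^ (2*k) * (n : ℝ) ^ (2*k - 1) := by
  set m := k - 1 with hm
  have hkm : k = m + 1 := by omega
  set M := Real.exp 1 with hM
  have hMpos : (0:ℝ) < M := Real.exp_pos 1
  have hA : (n.choose k : ℝ) * (k : ℝ)^k ≤ M^k * (n:ℝ)^k := choose_mul_le n k
  have hB : (n.choose m : ℝ) * (m : ℝ)^m ≤ M^m * (n:ℝ)^m := choose_mul_le n m
  have hstep : (k:ℝ)^m ≤ M * (m:ℝ)^m := by
    have := succ_pow_le_exp_mul m
    have hc : ((m:ℝ)+1) = (k:ℝ) := by rw [hkm]; push_cast; ring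
    rwa [hc] at this
  have hk2 : (k:ℝ)^m ≤ (k:ℝ)^k := by
    apply pow_le_pow_right₀ (by exact_mod_cast hk) (by omega)
  have h1 : (k:ℝ)^m * (k:ℝ)^m ≤ (M * (m:ℝ)^m) * (k:ℝ)^k :=
    mul_le_mul hstep hk2 (by positivity) (by positivity)
  have h2 : ((n.choose k : ℝ) * (k:ℝ)^k) * ((n.choose m : ℝ) * (m:ℝ)^m)
      ≤ (M^k * (n:ℝ)^k) * (M^m * (n:ℝ)^m) :=
    mul_le_mul hA hB (by positivity) (by positivity)
  have e1 : M^(2*k) = M * M^k * M^m := by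
    rw [← pow_succ' M, ← pow_add]
    congr 1
    omega
  have e2 : (n:ℝ)^(2*k-1) = (n:ℝ)^k * (n:ℝ)^m := by
    rw [← pow_add]
    congr 1
    omega
  calc (n.choose k : ℝ) * (n.choose m) * ((k : ℝ) ^ m)^2
      = (n.choose k : ℝ) * (n.choose m) * ((k:ℝ)^m * (k:ℝ)^m) := by ring
    _ ≤ (n.choose k : ℝ) * (n.choose m) * ((M * (m:ℝ)^m) * (k:ℝ)^k) := by
        apply mul_le_mul_of_nonneg_left h1 (by positivity)
    _ = M * (((n.choose k : ℝ) * (k:ℝ)^k) * ((n.choose m : ℝ) * (m:ℝ)^m)) := by ring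
    _ ≤ M * ((M^k * (n:ℝ)^k) * (M^m * (n:ℝ)^m)) := by
        apply mul_le_mul_of_nonneg_left h2 (le_of_lt hMpos)
    _ = M^(2*k) * (n:ℝ)^(2*k-1) := by rw [e1, e2]; ring

lemma term_bound {n k : ℕ} (pr : ℝ) (h0 : 0 ≤ pr) (h1 : pr ≤ 1)
    (hk : 1 ≤ k) (hk2 : 2 * k ≤ n + 1) (hn : 2 ≤ n) :
    (n.choose k : ℝ) * (n.choose (k-1)) * ((k : ℝ) ^ (k-1))^2
        * ((1 - pr) ^ (k * (n - (k - 1))) * pr ^ (2 * (k - 1)))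
      ≤ (n : ℝ) * Real.exp 1 ^ 2 * Real.exp (-((n:ℝ) * pr)) *
        (Real.exp 1 ^ 2 * ((n:ℝ)*pr)^2 * Real.exp (-((n:ℝ)*pr)/4)) ^ (k-1) := by
  set M := Real.exp 1 with hM
  set m := k - 1 with hm
  set L := (n:ℝ) * pr with hLdef
  have hkm : k = m + 1 := by omega
  have hmn : m ≤ n := by omega
  have hL0 : 0 ≤ L := by positivity
  have hcast : ((k * (n - m) : ℕ) : ℝ) = (k:ℝ) * ((n:ℝ) - m) := by
    push_cast [Nat.cast_sub hmn]
    ring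
  -- step 1 : replace (1-pr)^E by exp
  have e1 : 1 - pr ≤ Real.exp (-pr) := by nlinarith [Real.add_one_le_exp (-pr)]
  have e2 : (1-pr)^(k*(n-m)) ≤ Real.exp (((k*(n-m):ℕ):ℝ) * (-pr)) := by
    rw [Real.exp_nat_mul]
    exact pow_le_pow_left₀ (by linarith) e1 _
  -- step 2 : exponent inequality
  have key : L + (m:ℝ)*L/4 ≤ ((k*(n-m):ℕ):ℝ) * pr := by
    rw [hcast]
    have hk1 : (1:ℝ) ≤ (k:ℝ) := by exact_mod_cast hk
    have h34 : 4*(k:ℝ) ≤ 3*(n:ℝ) := by exact_mod_cast (by omega : 4*k ≤ 3*n)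
    have hmk : (m:ℝ) = (k:ℝ) - 1 := by rw [hkm]; push_cast; ring
    rw [hmk, hLdef]
    nlinarith [mul_nonneg h0 (mul_nonneg (by linarith : (0:ℝ) ≤ (k:ℝ)-1)
      (by linarith : (0:ℝ) ≤ 3/4*(n:ℝ) - (k:ℝ)))]
  have e3 : Real.exp (((k*(n-m):ℕ):ℝ) * (-pr)) ≤ Real.exp (-L) * Real.exp (-L/4)^m := by
    rw [← Real.exp_nat_mul, ← Real.exp_add]
    apply Real.exp_le_exp.mpr
    nlinarith [key]
  -- assemble
  have hcount := count_bound (n := n) hk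
  have hnonneg : (0:ℝ) ≤ Real.exp (((k*(n-m):ℕ):ℝ) * (-pr)) * pr^(2*m) := by positivity
  have hAB : (0:ℝ) ≤ (n.choose k : ℝ) * (n.choose m) * ((k : ℝ) ^ m)^2 := by positivity
  have e4 : (n:ℝ)^(2*k-1) * pr^(2*m) = (n:ℝ) * L^(2*m) := by
    have : 2*k-1 = 2*m+1 := by omega
    rw [this, hLdef, mul_pow, pow_succ']
    ring
  calc (n.choose k : ℝ) * (n.choose m) * ((k : ℝ) ^ m)^2
        * ((1 - pr) ^ (k * (n - m)) * pr ^ (2 * m))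
      ≤ (n.choose k : ℝ) * (n.choose m) * ((k : ℝ) ^ m)^2
        * (Real.exp (((k*(n-m):ℕ):ℝ) * (-pr)) * pr ^ (2 * m)) := by
        apply mul_le_mul_of_nonneg_left _ hAB
        apply mul_le_mul_of_nonneg_right e2 (by positivity)
    _ ≤ (M^(2*k) * (n:ℝ)^(2*k-1)) * (Real.exp (((k*(n-m):ℕ):ℝ) * (-pr)) * pr ^ (2 * m)) := by
        apply mul_le_mul_of_nonneg_right hcount hnonneg
    _ = (M^(2*k) * ((n:ℝ) * L^(2*m))) * Real.exp (((k*(n-m):ℕ):ℝ) * (-pr)) := by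
        rw [← e4]; ring
    _ ≤ (M^(2*k) * ((n:ℝ) * L^(2*m))) * (Real.exp (-L) * Real.exp (-L/4)^m) := by
        apply mul_le_mul_of_nonneg_left e3 (by positivity)
    _ = (n : ℝ) * M ^ 2 * Real.exp (-L) * (M ^ 2 * L^2 * Real.exp (-L/4)) ^ m := by
        have eM : M^(2*k) = M^2 * (M^2)^m := by
          rw [← pow_mul, ← pow_add]
          congr 1
          omega
        have eL : L^(2*m) = (L^2)^m := by rw [← pow_mul]
        rw [eM, eL, mul_pow, mul_pow]
        ring

lemma sum_bound {n : ℕ} (pr : ℝ) (h0 : 0 ≤ pr) (h1 : pr ≤ 1) (hn : 2 ≤ n)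
    (hr : Real.exp 1 ^ 2 * ((n:ℝ)*pr)^2 * Real.exp (-((n:ℝ)*pr)/4) ≤ 1/2) :
    2 * ∑ k ∈ Finset.Icc 1 ((n+1)/2),
      (n.choose k : ℝ) * (n.choose (k-1)) * ((k : ℝ)^(k-1))^2
        * ((1 - pr)^(k*(n-(k-1))) * pr^(2*(k-1)))
      ≤ 4 * Real.exp 1 ^ 2 * ((n:ℝ) * Real.exp (-((n:ℝ)*pr))) := by
  set K := (n+1)/2 with hK
  set r := Real.exp 1 ^ 2 * ((n:ℝ)*pr)^2 * Real.exp (-((n:ℝ)*pr)/4) with hrdef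
  have hr0 : 0 ≤ r := by positivity
  set C := (n : ℝ) * Real.exp 1 ^ 2 * Real.exp (-((n:ℝ) * pr)) with hC
  have hC0 : 0 ≤ C := by positivity
  have hsum1 : ∑ k ∈ Finset.Icc 1 K,
      (n.choose k : ℝ) * (n.choose (k-1)) * ((k : ℝ)^(k-1))^2
        * ((1 - pr)^(k*(n-(k-1))) * pr^(2*(k-1)))
      ≤ ∑ k ∈ Finset.Icc 1 K, C * r^(k-1) := by
    apply Finset.sum_le_sum
    intro k hk
    rw [Finset.mem_Icc] at hk
    exact term_bound pr h0 h1 hk.1 (by omega) hn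
  have hsum2 : ∑ k ∈ Finset.Icc 1 K, C * r^(k-1) ≤ C * 2 := by
    rw [← Finset.mul_sum]
    apply mul_le_mul_of_nonneg_left _ hC0
    calc ∑ k ∈ Finset.Icc 1 K, r^(k-1)
        ≤ ∑ k ∈ Finset.Icc 1 K, (1/2:ℝ)^(k-1) := by
          apply Finset.sum_le_sum
          intro k _
          exact pow_le_pow_left₀ hr0 hr _
      _ = ∑ i ∈ Finset.range K, (1/2:ℝ)^i := by
          have himg : Finset.Icc 1 K = (Finset.range K).image (· + 1) := by
            ext a
            simp only [Finset.mem_Icc, Finset.mem_image, Finset.mem_range]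
            constructor
            · rintro ⟨h1, h2⟩; exact ⟨a - 1, by omega, by omega⟩
            · rintro ⟨i, hi, rfl⟩; omega
          rw [himg, Finset.sum_image (fun a _ b _ h => by simpa using h)]
          simp
      _ ≤ 2 := by
          have h := geom_sum_eq (by norm_num : (1/2:ℝ) ≠ 1) K
          rw [h]
          have h0' : (0:ℝ) ≤ (1/2:ℝ)^K := by positivity
          have h2 : ((1/2:ℝ)^K - 1)/((1/2:ℝ)-1) = 2*(1 - (1/2:ℝ)^K) := by ring
          rw [h2]; nlinarith
  calc 2 * ∑ k ∈ Finset.Icc 1 K,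
      (n.choose k : ℝ) * (n.choose (k-1)) * ((k : ℝ)^(k-1))^2
        * ((1 - pr)^(k*(n-(k-1))) * pr^(2*(k-1)))
      ≤ 2 * (C * 2) := by
        apply mul_le_mul_of_nonneg_left (le_trans hsum1 hsum2) (by norm_num)
    _ = 4 * Real.exp 1 ^ 2 * ((n:ℝ) * Real.exp (-((n:ℝ) * pr))) := by rw [hC]; ring

lemma ennreal_bound {n : ℕ} (pr : ℝ) (h0 : 0 ≤ pr) (h1 : pr ≤ 1) :
    2 * ∑ k ∈ Finset.Icc 1 ((n+1)/2),
      (n.choose k : ENNReal) * (n.choose (k-1)) * ((k:ENNReal)^(k-1))^2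
        * ((1 - ENNReal.ofReal pr)^(k*(n-(k-1))) * (ENNReal.ofReal pr)^(2*(k-1)))
    = ENNReal.ofReal (2 * ∑ k ∈ Finset.Icc 1 ((n+1)/2),
      (n.choose k : ℝ) * (n.choose (k-1)) * ((k:ℝ)^(k-1))^2
        * ((1 - pr)^(k*(n-(k-1))) * pr^(2*(k-1)))) := by
  have hpr1 : (0:ℝ) ≤ 1 - pr := by linarith
  have h1p : (1 : ENNReal) - ENNReal.ofReal pr = ENNReal.ofReal (1 - pr) := by
    rw [ENNReal.ofReal_sub 1 h0, ENNReal.ofReal_one]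
  rw [ENNReal.ofReal_mul (by norm_num), ENNReal.ofReal_ofNat,
    ENNReal.ofReal_sum_of_nonneg (fun k _ => by positivity)]
  congr 1
  apply Finset.sum_congr rfl
  intro k _
  rw [ENNReal.ofReal_mul (by positivity), ENNReal.ofReal_mul (by positivity),
    ENNReal.ofReal_mul (by positivity),
    ENNReal.ofReal_mul (pow_nonneg hpr1 _),
    ENNReal.ofReal_pow hpr1, ENNReal.ofReal_pow h0,
    ENNReal.ofReal_pow (pow_nonneg (by positivity) _), ENNReal.ofReal_pow (by positivity),
    ENNReal.ofReal_natCast, ENNReal.ofReal_natCast, ENNReal.ofReal_natCast, h1p]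

theorem main (c : ℕ → ℝ) (hc : Tendsto c atTop atTop) :
    Tendsto
      (fun n =>
        bipartiteER n n (ENNReal.ofReal ((Real.log n + c n) / n) ⊓ 1) inf_le_right
          {G | ∃ σ : Equiv.Perm (Fin n), ∀ i, G (i, σ i) = true})
      atTop (nhds 1) := by
  classical
  set pr : ℕ → ℝ := fun n => min (max ((Real.log n + c n) / n) 0) 1 with hprdef
  have hpr0 : ∀ n, 0 ≤ pr n := fun n => le_min (le_max_right _ _) zero_le_one
  have hpr1 : ∀ n, pr n ≤ 1 := fun n => min_le_right _ _
  have hpeq : ∀ n : ℕ, ENNReal.ofReal ((Real.log n + c n) / n) ⊓ 1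
      = ENNReal.ofReal (pr n) := by
    intro n
    have hmono : Monotone ENNReal.ofReal := fun a b h => ENNReal.ofReal_le_ofReal h
    have hmax : ENNReal.ofReal (max ((Real.log n + c n) / n) 0)
        = ENNReal.ofReal ((Real.log n + c n) / n) := by
      rcases le_total ((Real.log n + c n) / n) 0 with h | h
      · rw [max_eq_right h, ENNReal.ofReal_zero, ENNReal.ofReal_eq_zero.mpr h]
      · rw [max_eq_left h]
    rw [hprdef]
    simp only []
    rw [Monotone.map_min hmono, ENNReal.ofReal_one, hmax]
  -- the noPM measure
  set μno : ℕ → ENNReal := fun n =>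
    bipartiteER n n (ENNReal.ofReal ((Real.log n + c n) / n) ⊓ 1) inf_le_right
      {G | ¬∃ σ : Equiv.Perm (Fin n), ∀ i, G (i, σ i) = true} with hμno
  -- eventual bound on μno
  set m : ℕ → ℝ := fun n => min (c n) ((n:ℝ) - Real.log n) with hm
  have hlogn : Tendsto (fun n : ℕ => Real.log n) atTop atTop :=
    Real.tendsto_log_atTop.comp tendsto_natCast_atTop_atTop
  have hsub : Tendsto (fun n : ℕ => (n:ℝ) - Real.log n) atTop atTop := by
    apply tendsto_atTop_mono' atTop (f₁ := fun n : ℕ => (n:ℝ)/2)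
    · -- eventually n/2 ≤ n - log n
      have h2 : ∀ᶠ x in atTop, |Real.log x| ≤ (1/2 : ℝ) * |x| :=
        Real.isLittleO_log_id_atTop.def (by norm_num)
      have h3 : ∀ᶠ n : ℕ in atTop, |Real.log n| ≤ (1/2:ℝ) * |(n:ℝ)| :=
        tendsto_natCast_atTop_atTop.eventually h2
      filter_upwards [h3, eventually_ge_atTop 1] with n hn hn1
      have hn0 : (0:ℝ) ≤ n := by positivity
      rw [abs_of_nonneg hn0] at hn
      have := le_abs_self (Real.log n)
      nlinarith
    · exact (tendsto_natCast_atTop_atTop).atTop_div_const (by norm_num)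
  have htendm : Tendsto m atTop atTop := by
    rw [tendsto_atTop] at hc hsub ⊢
    intro b
    filter_upwards [hc b, hsub b] with n h1 h2
    exact le_min h1 h2
  -- eventually, the quantities take the clean form
  have hevL : ∀ᶠ n : ℕ in atTop, (n:ℝ) * pr n = min (Real.log n + c n) (n:ℝ) := by
    filter_upwards [hc.eventually_ge_atTop 0, eventually_ge_atTop 1] with n hcn hn1
    have hn0 : (0:ℝ) < n := by
      have : (0:ℕ) < n := by omega
      exact_mod_cast this
    have hx0 : 0 ≤ (Real.log n + c n) / n := by
      apply div_nonneg _ (le_of_lt hn0)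
      have := Real.log_nonneg (show (1:ℝ) ≤ (n:ℝ) by exact_mod_cast hn1)
      linarith
    rw [hprdef]
    simp only [max_eq_left hx0]
    rw [mul_min_of_nonneg _ _ (le_of_lt hn0), mul_one,
      mul_div_cancel₀ _ (ne_of_gt hn0)]
  have hevexp : ∀ᶠ n : ℕ in atTop, (n:ℝ) * Real.exp (-((n:ℝ) * pr n))
      = Real.exp (-(m n)) := by
    filter_upwards [hevL, eventually_ge_atTop 1] with n hL hn1
    have hn0 : (0:ℝ) < n := by
      have : (0:ℕ) < n := by omega
      exact_mod_cast this
    have key : ∀ x : ℝ, (n:ℝ) * Real.exp (-x) = Real.exp (Real.log n - x) := by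
      intro x
      rw [Real.exp_sub, Real.exp_log hn0, Real.exp_neg, div_eq_mul_inv]
    rw [hL, key]
    congr 1
    show Real.log n - min (Real.log n + c n) (n:ℝ) = -(min (c n) ((n:ℝ) - Real.log n))
    rcases le_total (Real.log n + c n) (n:ℝ) with h | h
    · rw [min_eq_left h, min_eq_left (by linarith : c n ≤ (n:ℝ) - Real.log n)]
      ring
    · rw [min_eq_right h, min_eq_right (by linarith : (n:ℝ) - Real.log n ≤ c n)]
      ring
  -- eventually r n ≤ 1/2
  have hLtend : Tendsto (fun n : ℕ => (n:ℝ) * pr n) atTop atTop := by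
    apply tendsto_atTop_mono' atTop (f₁ := fun n : ℕ => Real.log n)
    · filter_upwards [hevL, hc.eventually_ge_atTop 0, eventually_ge_atTop 1] with n hL hcn hn1
      rw [hL]
      apply le_min (by linarith)
      have := Real.log_le_sub_one_of_pos (show (0:ℝ) < n by
        have : (0:ℕ) < n := by omega
        exact_mod_cast this)
      linarith
    · exact hlogn
  have hφ : Tendsto (fun x : ℝ => Real.exp 1 ^ 2 * x^2 * Real.exp (-x/4)) atTop (nhds 0) := by
    have h4 : Tendsto (fun x : ℝ => x / 4) atTop atTop :=
      tendsto_id.atTop_div_const (by norm_num)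
    have hbase := (Real.tendsto_pow_mul_exp_neg_atTop_nhds_zero 2).comp h4
    have : (fun x : ℝ => Real.exp 1 ^ 2 * x^2 * Real.exp (-x/4))
        = fun x : ℝ => (16 * Real.exp 1 ^ 2) * ((x/4)^2 * Real.exp (-(x/4))) := by
      funext x
      rw [neg_div]
      ring
    rw [this]
    have := hbase.const_mul (16 * Real.exp 1 ^ 2)
    simpa using this
  have hrev : ∀ᶠ n : ℕ in atTop,
      Real.exp 1 ^ 2 * ((n:ℝ) * pr n)^2 * Real.exp (-((n:ℝ) * pr n)/4) ≤ 1/2 := by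
    have := (hφ.comp hLtend).eventually_lt_const (show (0:ℝ) < 1/2 by norm_num)
    filter_upwards [this] with n h
    exact le_of_lt h
  -- the eventual upper bound
  have hub : ∀ᶠ n : ℕ in atTop,
      μno n ≤ ENNReal.ofReal (4 * Real.exp 1 ^ 2 * Real.exp (-(m n))) := by
    filter_upwards [hrev, hevexp, eventually_ge_atTop 2] with n hr hexp hn2
    have step1 := measure_noPM_le (n := n)
      (ENNReal.ofReal ((Real.log n + c n) / n) ⊓ 1) inf_le_right
    rw [hμno]
    refine le_trans step1 ?_
    rw [hpeq n, ennreal_bound (pr n) (hpr0 n) (hpr1 n)]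
    apply ENNReal.ofReal_le_ofReal
    refine le_trans (sum_bound (pr n) (hpr0 n) (hpr1 n) hn2 hr) ?_
    rw [hexp]
  -- μno → 0
  have hupper : Tendsto (fun n => ENNReal.ofReal (4 * Real.exp 1 ^ 2 * Real.exp (-(m n))))
      atTop (nhds 0) := by
    have hreal : Tendsto (fun n => 4 * Real.exp 1 ^ 2 * Real.exp (-(m n))) atTop (nhds 0) := by
      have hexp : Tendsto (fun n => Real.exp (-(m n))) atTop (nhds 0) :=
        Real.tendsto_exp_atBot.comp (tendsto_neg_atTop_atBot.comp htendm)
      have := hexp.const_mul (4 * Real.exp 1 ^ 2)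
      simpa using this
    have := ENNReal.tendsto_ofReal hreal
    simpa using this
  have hμno0 : Tendsto μno atTop (nhds 0) := by
    apply tendsto_of_tendsto_of_tendsto_of_le_of_le' tendsto_const_nhds hupper
    · exact Filter.Eventually.of_forall (fun n => zero_le)
    · exact hub
  -- conclude
  have hcompl : ∀ n : ℕ,
      bipartiteER n n (ENNReal.ofReal ((Real.log n + c n) / n) ⊓ 1) inf_le_right
        {G | ∃ σ : Equiv.Perm (Fin n), ∀ i, G (i, σ i) = true} = 1 - μno n := by
    intro n
    rw [hμno]
    simp only []
    rw [← prob_compl_eq_one_sub (measurableSet_all _)]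
    congr 1
    ext G
    simp [Set.mem_compl_iff]
  have : Tendsto (fun n => 1 - μno n) atTop (nhds 1) := by
    have hcont := (ENNReal.continuous_sub_left (a := 1) ENNReal.one_ne_top).tendsto 0
    have := hcont.comp hμno0
    simpa [Function.comp_def] using this
  exact (Filter.tendsto_congr (fun n => (hcompl n).symm)).mp this

end ERPM

/-- A random bipartite graph from `G(n, n, p)` with `p = (log n + c n)/n` (truncated
to at most `1`), where `c n → ∞`, contains a perfect matching with high probability. -/
theorem er_perfect_matching_whp (c : ℕ → ℝ) (hc : Tendsto c atTop atTop) :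
    Tendsto
      (fun n =>
        bipartiteER n n (ENNReal.ofReal ((Real.log n + c n) / n) ⊓ 1) inf_le_right
          {G | ∃ σ : Equiv.Perm (Fin n), ∀ i, G (i, σ i) = true})
      atTop (nhds 1) := ERPM.main c hc
end

section
/- Let c : ℕ → ℝ be any function with c(n) → ∞ as n → ∞. Let n_L = n_L(n) and n_R = n_R(n) satisfy n/2 ≤ n_L ≤ n and n_R ≤ n, and let G be drawn from G(n_L, n_R, p) with p = 2(log n + c(n))/n (truncated to [0,1] if necessary). Then the probability that G contains a right-saturated 2-matching tends to 1 as n → ∞. -/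
open MeasureTheory Filter

/-- `G` contains a right-saturated 2-matching: each right vertex is matched along an edge
to a left vertex, and every left vertex is matched to at most two right vertices. -/
def HasRightSaturatedTwoMatching {nL nR : ℕ} (G : Fin nL × Fin nR → Bool) : Prop :=
  ∃ g : Fin nR → Fin nL,
    (∀ r, G (g r, r) = true) ∧
    ∀ ℓ : Fin nL, (Finset.univ.filter (fun r => g r = ℓ)).card ≤ 2

section All
open Finset

section MeasureCore

set_option linter.unusedSectionVars false
variable {ι : Type*} [Fintype ι] [DecidableEq ι] {p : ENNReal} (hp : p ≤ 1)

noncomputable def bern (p : ENNReal) (hp : p ≤ 1) : Measure Bool := (PMF.bernoulli p.toNNReal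
    (by simpa using ENNReal.toNNReal_mono ENNReal.one_ne_top hp)).toMeasure

lemma bern_true : bern p hp {true} = p := by
  rw [bern, PMF.toMeasure_apply_singleton _ _ (measurableSet_singleton _)]
  refine (PMF.bernoulli_apply _ true).trans ?_
  show ((p.toNNReal : NNReal) : ENNReal) = p
  exact ENNReal.coe_toNNReal (ne_top_of_le_ne_top ENNReal.one_ne_top hp)

lemma bern_false : bern p hp {false} = 1 - p := by
  rw [bern, PMF.toMeasure_apply_singleton _ _ (measurableSet_singleton _)]
  refine (PMF.bernoulli_apply _ false).trans ?_
  show (((1 : NNReal) - p.toNNReal : NNReal) : ENNReal) = 1 - p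
  rw [ENNReal.coe_sub, ENNReal.coe_one, ENNReal.coe_toNNReal (ne_top_of_le_ne_top ENNReal.one_ne_top hp)]

instance : IsProbabilityMeasure (bern p hp) := PMF.toMeasure.isProbabilityMeasure _

/-- the cylinder event: coordinates in A are false, coordinates in B are true -/
def EV (A B : Finset ι) : Set (ι → Bool) :=
  {G | (∀ e ∈ A, G e = false) ∧ (∀ e ∈ B, G e = true)}

lemma EV_eq_pi (A B : Finset ι) (hd : Disjoint A B) :
    EV A B = Set.pi Set.univ
      (fun e => if e ∈ A then ({false} : Set Bool) else if e ∈ B then {true} else Set.univ) := by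
  ext G
  simp only [EV, Set.mem_setOf_eq, Set.mem_pi, Set.mem_univ, forall_true_left]
  constructor
  · rintro ⟨h1, h2⟩ e
    by_cases hA : e ∈ A
    · simp [hA, h1 e hA]
    · by_cases hB : e ∈ B
      · simp [hA, hB, h2 e hB]
      · simp [hA, hB]
  · intro h
    constructor
    · intro e he
      have := h e
      simp [he] at this
      exact this
    · intro e he
      have := h e
      have hA : e ∉ A := fun hA => (Finset.disjoint_left.mp hd hA) he
      simp [he, hA] at this
      exact this

lemma measure_EV (A B : Finset ι) (hd : Disjoint A B) :
    (Measure.pi fun _ : ι => bern p hp) (EV A B) = (1 - p) ^ A.card * p ^ B.card := by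
  rw [EV_eq_pi A B hd, Measure.pi_pi]
  have : ∀ e : ι, (bern p hp)
      (if e ∈ A then ({false} : Set Bool) else if e ∈ B then {true} else Set.univ)
      = if e ∈ A then (1 - p) else if e ∈ B then p else 1 := by
    intro e
    by_cases hA : e ∈ A
    · simp [hA, bern_false]
    · by_cases hB : e ∈ B
      · simp [hA, hB, bern_true]
      · simp only [if_neg hA, if_neg hB]; exact measure_univ
  simp_rw [this]
  rw [← Finset.prod_subset (Finset.subset_univ (A ∪ B)) (by
    intro e _ he
    simp only [Finset.mem_union, not_or] at he
    simp [he.1, he.2])]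
  rw [Finset.prod_union hd]
  rw [Finset.prod_congr rfl (fun e he => by simp [he] : ∀ e ∈ A, _ = (1-p)),
      Finset.prod_congr rfl (fun e he => by
        have : e ∉ A := fun h => Finset.disjoint_left.mp hd h he
        simp [he, this] : ∀ e ∈ B, _ = p)]
  simp

end MeasureCore
section Comb

variable {nL nR : ℕ}

/-- left-neighborhood of a set of right vertices -/
def NBL (G : Fin nL × Fin nR → Bool) (S : Finset (Fin nR)) : Finset (Fin nL) :=
  Finset.univ.filter fun ℓ => ∃ r ∈ S, G (ℓ, r) = true

/-- right-neighborhood (within R1) of a set of left vertices -/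
def NBR (G : Fin nL × Fin nR → Bool) (R1 : Finset (Fin nR)) (U : Finset (Fin nL)) :
    Finset (Fin nR) :=
  R1.filter fun r => ∃ ℓ ∈ U, G (ℓ, r) = true

/-- matching saturating `R1` -/
def HasSatM (R1 : Finset (Fin nR)) (G : Fin nL × Fin nR → Bool) : Prop :=
  ∃ g : Fin nR → Fin nL, (∀ r ∈ R1, G (g r, r) = true) ∧ Set.InjOn g ↑R1

lemma NBL_mono (G : Fin nL × Fin nR → Bool) {S S' : Finset (Fin nR)} (h : S ⊆ S') :
    NBL G S ⊆ NBL G S' := by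
  intro ℓ hℓ
  simp only [NBL, mem_filter, mem_univ, true_and] at *
  obtain ⟨r, hr, he⟩ := hℓ
  exact ⟨r, h hr, he⟩

lemma NBR_mono (G : Fin nL × Fin nR → Bool) (R1 : Finset (Fin nR))
    {U U' : Finset (Fin nL)} (h : U ⊆ U') : NBR G R1 U ⊆ NBR G R1 U' := by
  intro r hr
  simp only [NBR, mem_filter] at *
  obtain ⟨h1, ℓ, hℓ, he⟩ := hr
  exact ⟨h1, ℓ, h hℓ, he⟩

lemma combine_matchings {G : Fin nL × Fin nR → Bool} {R1 : Finset (Fin nR)}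
    (h1 : HasSatM R1 G) (h2 : HasSatM R1ᶜ G) : HasRightSaturatedTwoMatching G := by
  obtain ⟨g1, hg1e, hg1i⟩ := h1
  obtain ⟨g2, hg2e, hg2i⟩ := h2
  classical
  refine ⟨fun r => if r ∈ R1 then g1 r else g2 r, ?_, ?_⟩
  · intro r
    by_cases h : r ∈ R1
    · simpa [h] using hg1e r h
    · simpa [h] using hg2e r (Finset.mem_compl.mpr h)
  · intro ℓ
    have hsub : (Finset.univ.filter (fun r => (if r ∈ R1 then g1 r else g2 r) = ℓ)) ⊆
        (R1.filter (fun r => g1 r = ℓ)) ∪ (R1ᶜ.filter (fun r => g2 r = ℓ)) := by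
      intro r hr
      simp only [mem_filter, mem_univ, true_and] at hr
      by_cases h : r ∈ R1
      · simp only [h, if_true] at hr
        exact Finset.mem_union_left _ (mem_filter.mpr ⟨h, hr⟩)
      · simp only [h, if_false] at hr
        exact Finset.mem_union_right _ (mem_filter.mpr ⟨Finset.mem_compl.mpr h, hr⟩)
    have c1 : (R1.filter (fun r => g1 r = ℓ)).card ≤ 1 := by
      apply Finset.card_le_one.mpr
      intro a ha b hb
      simp only [mem_filter] at ha hb
      exact hg1i ha.1 hb.1 (ha.2.trans hb.2.symm)
    have c2 : (R1ᶜ.filter (fun r => g2 r = ℓ)).card ≤ 1 := by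
      apply Finset.card_le_one.mpr
      intro a ha b hb
      simp only [mem_filter] at ha hb
      exact hg2i ha.1 hb.1 (ha.2.trans hb.2.symm)
    calc (Finset.univ.filter (fun r => (if r ∈ R1 then g1 r else g2 r) = ℓ)).card
        ≤ _ := Finset.card_le_card hsub
      _ ≤ _ := Finset.card_union_le _ _
      _ ≤ 2 := by omega

lemma hall_fail {G : Fin nL × Fin nR → Bool} {R1 : Finset (Fin nR)} (hnL : 0 < nL)
    (h : ¬ HasSatM R1 G) : ∃ S ⊆ R1, (NBL G S).card < S.card := by
  classical
  by_contra hno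
  push_neg at hno
  have hall : ∀ s : Finset {x // x ∈ R1},
      s.card ≤ (s.biUnion (fun r => Finset.univ.filter fun ℓ => G (ℓ, (r : Fin nR)) = true)).card := by
    intro s
    have hcard : (s.image (fun r : {x // x ∈ R1} => (r : Fin nR))).card = s.card :=
      Finset.card_image_of_injective s Subtype.coe_injective
    have hsub : s.image (fun r : {x // x ∈ R1} => (r : Fin nR)) ⊆ R1 := by
      intro r hr
      simp only [Finset.mem_image] at hr
      obtain ⟨r', _, rfl⟩ := hr
      exact r'.2
    have heq : s.biUnion (fun r => Finset.univ.filter fun ℓ => G (ℓ, (r : Fin nR)) = true)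
        = NBL G (s.image (fun r : {x // x ∈ R1} => (r : Fin nR))) := by
      ext ℓ
      simp [NBL, Finset.mem_biUnion]
    rw [heq, ← hcard]
    by_contra hlt
    push_neg at hlt
    exact absurd (hno _ hsub) (by omega)
  obtain ⟨f, hfinj, hf⟩ :=
    (Finset.all_card_le_biUnion_card_iff_exists_injective
      (fun r : {x // x ∈ R1} => Finset.univ.filter fun ℓ => G (ℓ, (r : Fin nR)) = true)).mp hall
  apply h
  refine ⟨fun r => if hr : r ∈ R1 then f ⟨r, hr⟩ else ⟨0, hnL⟩, ?_, ?_⟩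
  · intro r hr
    have := hf ⟨r, hr⟩
    simp only [Finset.mem_filter] at this
    simp [hr, this.2]
  · intro a ha b hb hab
    simp only [Finset.mem_coe] at ha hb
    simp only [ha, hb, dif_pos] at hab
    exact congrArg Subtype.val (hfinj hab)

end Comb
section Struct

variable {nL nR : ℕ}

/-- right witness structure -/
def RightWitness (R1 : Finset (Fin nR)) (a : ℕ) (G : Fin nL × Fin nR → Bool) : Prop :=
  ∃ S : Finset (Fin nR), S ⊆ R1 ∧ S.card = a ∧ ∃ T : Finset (Fin nL), T.card + 1 = a ∧
    (∀ r ∈ S, ∀ ℓ, ℓ ∉ T → G (ℓ, r) = false) ∧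
    (∀ ℓ ∈ T, ∃ r₁ ∈ S, ∃ r₂ ∈ S, r₁ ≠ r₂ ∧ G (ℓ, r₁) = true ∧ G (ℓ, r₂) = true)

/-- left witness structure -/
def LeftWitness (R1 : Finset (Fin nR)) (a : ℕ) (G : Fin nL × Fin nR → Bool) : Prop :=
  ∃ U : Finset (Fin nL), U.card = a ∧ ∃ T : Finset (Fin nR), T ⊆ R1 ∧
    nL + T.card + 1 = R1.card + a ∧
    (∀ ℓ ∈ U, ∀ r ∈ R1, r ∉ T → G (ℓ, r) = false) ∧
    (∀ r ∈ T, ∃ ℓ₁ ∈ U, ∃ ℓ₂ ∈ U, ℓ₁ ≠ ℓ₂ ∧ G (ℓ₁, r) = true ∧ G (ℓ₂, r) = true)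

lemma right_struct {G : Fin nL × Fin nR → Bool} {R1 : Finset (Fin nR)}
    (hbad : ∃ S ⊆ R1, (NBL G S).card < S.card) :
    ∃ S ⊆ R1, ((NBL G S).card < S.card ∧ ∀ S' ⊆ R1, (NBL G S').card < S'.card → S.card ≤ S'.card) ∧
      RightWitness R1 S.card G := by
  classical
  obtain ⟨S₀, hS₀sub, hS₀⟩ := hbad
  obtain ⟨S, hSmem, hSmin⟩ := Finset.exists_min_image
    ((Finset.univ : Finset (Finset (Fin nR))).filter fun S => S ⊆ R1 ∧ (NBL G S).card < S.card)
    Finset.card ⟨S₀, by simp [hS₀sub, hS₀]⟩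
  simp only [Finset.mem_filter, Finset.mem_univ, true_and] at hSmem
  obtain ⟨hSsub, hSbad⟩ := hSmem
  have hmin : ∀ S' ⊆ R1, (NBL G S').card < S'.card → S.card ≤ S'.card := by
    intro S' h1 h2
    exact hSmin S' (by simp [h1, h2])
  refine ⟨S, hSsub, ⟨⟨hSbad, hmin⟩, ?_⟩⟩
  have hSne : S.Nonempty := Finset.card_pos.mp (by omega)
  -- exact count
  have hcard : (NBL G S).card + 1 = S.card := by
    by_contra hne
    obtain ⟨r, hr⟩ := hSne
    have h1 : (NBL G (S.erase r)).card ≤ (NBL G S).card :=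
      Finset.card_le_card (NBL_mono G (Finset.erase_subset _ _))
    have h2 : (S.erase r).card = S.card - 1 := Finset.card_erase_of_mem hr
    have hbad' : (NBL G (S.erase r)).card < (S.erase r).card := by omega
    have := hmin _ ((Finset.erase_subset _ _).trans hSsub) hbad'
    omega
  refine ⟨S, hSsub, rfl, NBL G S, hcard, ?_, ?_⟩
  · intro r hr ℓ hℓ
    by_contra he
    simp only [Bool.not_eq_false] at he
    exact hℓ (by simp only [NBL, mem_filter, mem_univ, true_and]; exact ⟨r, hr, he⟩)
  · intro ℓ hℓ
    simp only [NBL, mem_filter, mem_univ, true_and] at hℓ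
    obtain ⟨r₁, hr₁, he₁⟩ := hℓ
    by_contra hno
    push_neg at hno
    have honly : ∀ r ∈ S, r ≠ r₁ → G (ℓ, r) ≠ true := by
      intro r hr hne he
      exact hno r₁ hr₁ r hr (Ne.symm hne) he₁ he
    -- erase r₁ makes a smaller bad set
    have hsub' : NBL G (S.erase r₁) ⊆ (NBL G S).erase ℓ := by
      intro ℓ' hℓ'
      simp only [NBL, mem_filter, mem_univ, true_and] at hℓ'
      obtain ⟨r', hr', he'⟩ := hℓ'
      have hrS : r' ∈ S := Finset.mem_of_mem_erase hr'
      refine Finset.mem_erase.mpr ⟨?_, by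
        simp only [NBL, mem_filter, mem_univ, true_and]; exact ⟨r', hrS, he'⟩⟩
      intro hEq
      exact honly r' hrS (Finset.ne_of_mem_erase hr') (hEq ▸ he')
    have hℓmem : ℓ ∈ NBL G S := by
      simp only [NBL, mem_filter, mem_univ, true_and]; exact ⟨r₁, hr₁, he₁⟩
    have h1 : (NBL G (S.erase r₁)).card ≤ (NBL G S).card - 1 := by
      calc (NBL G (S.erase r₁)).card ≤ ((NBL G S).erase ℓ).card := Finset.card_le_card hsub'
        _ = (NBL G S).card - 1 := Finset.card_erase_of_mem hℓmem
    have h2 : (S.erase r₁).card = S.card - 1 := Finset.card_erase_of_mem hr₁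
    have hNpos : 0 < (NBL G S).card := Finset.card_pos.mpr ⟨ℓ, hℓmem⟩
    have hbad' : (NBL G (S.erase r₁)).card < (S.erase r₁).card := by omega
    have := hmin _ ((Finset.erase_subset _ _).trans hSsub) hbad'
    omega

lemma left_struct {G : Fin nL × Fin nR → Bool} {R1 : Finset (Fin nR)} (hm : R1.card ≤ nL)
    (hbad : ∃ U : Finset (Fin nL), nL + (NBR G R1 U).card + 1 ≤ R1.card + U.card) :
    ∃ U : Finset (Fin nL),
      (∀ U' : Finset (Fin nL), nL + (NBR G R1 U').card + 1 ≤ R1.card + U'.card →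
        U.card ≤ U'.card) ∧ LeftWitness R1 U.card G := by
  classical
  obtain ⟨U₀, hU₀⟩ := hbad
  obtain ⟨U, hUmem, hUmin⟩ := Finset.exists_min_image
    ((Finset.univ : Finset (Finset (Fin nL))).filter
      fun U => nL + (NBR G R1 U).card + 1 ≤ R1.card + U.card)
    Finset.card ⟨U₀, by simp; omega⟩
  simp only [Finset.mem_filter, Finset.mem_univ, true_and] at hUmem
  have hmin : ∀ U' : Finset (Fin nL), nL + (NBR G R1 U').card + 1 ≤ R1.card + U'.card →
      U.card ≤ U'.card := fun U' h => hUmin U' (by simp; omega)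
  refine ⟨U, hmin, ?_⟩
  have hUne : U.Nonempty := by
    rcases Finset.eq_empty_or_nonempty U with rfl | h
    · simp only [Finset.card_empty, add_zero] at hUmem
      have : (NBR G (Finset.empty) (∅ : Finset (Fin nL))).card ≥ 0 := Nat.zero_le _
      omega
    · exact h
  have hcard : nL + (NBR G R1 U).card + 1 = R1.card + U.card := by
    by_contra hne
    obtain ⟨ℓ, hℓ⟩ := hUne
    have h1 : (NBR G R1 (U.erase ℓ)).card ≤ (NBR G R1 U).card :=
      Finset.card_le_card (NBR_mono G R1 (Finset.erase_subset _ _))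
    have h2 : (U.erase ℓ).card = U.card - 1 := Finset.card_erase_of_mem hℓ
    have hbad' : nL + (NBR G R1 (U.erase ℓ)).card + 1 ≤ R1.card + (U.erase ℓ).card := by
      have hu : 1 ≤ U.card := Finset.card_pos.mpr ⟨ℓ, hℓ⟩
      omega
    have := hmin _ hbad'
    omega
  refine ⟨U, rfl, NBR G R1 U, Finset.filter_subset _ _, hcard, ?_, ?_⟩
  · intro ℓ hℓ r hr hrT
    by_contra he
    simp only [Bool.not_eq_false] at he
    exact hrT (by simp only [NBR, mem_filter]; exact ⟨hr, ℓ, hℓ, he⟩)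
  · intro r hr
    simp only [NBR, mem_filter] at hr
    obtain ⟨hrR1, ℓ₁, hℓ₁, he₁⟩ := hr
    by_contra hno
    push_neg at hno
    have honly : ∀ ℓ ∈ U, ℓ ≠ ℓ₁ → G (ℓ, r) ≠ true := by
      intro ℓ hℓ hne he
      exact hno ℓ₁ hℓ₁ ℓ hℓ (Ne.symm hne) he₁ he
    have hrmem : r ∈ NBR G R1 U := by
      simp only [NBR, mem_filter]; exact ⟨hrR1, ℓ₁, hℓ₁, he₁⟩
    have hsub' : NBR G R1 (U.erase ℓ₁) ⊆ (NBR G R1 U).erase r := by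
      intro r' hr'
      simp only [NBR, mem_filter] at hr'
      obtain ⟨hr'R1, ℓ', hℓ', he'⟩ := hr'
      have hℓU : ℓ' ∈ U := Finset.mem_of_mem_erase hℓ'
      refine Finset.mem_erase.mpr ⟨?_, by
        simp only [NBR, mem_filter]; exact ⟨hr'R1, ℓ', hℓU, he'⟩⟩
      intro hEq
      exact honly ℓ' hℓU (Finset.ne_of_mem_erase hℓ') (hEq ▸ he')
    have h1 : (NBR G R1 (U.erase ℓ₁)).card ≤ (NBR G R1 U).card - 1 := by
      calc (NBR G R1 (U.erase ℓ₁)).card ≤ ((NBR G R1 U).erase r).card :=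
            Finset.card_le_card hsub'
        _ = (NBR G R1 U).card - 1 := Finset.card_erase_of_mem hrmem
    have h2 : (U.erase ℓ₁).card = U.card - 1 := Finset.card_erase_of_mem hℓ₁
    have hNpos : 0 < (NBR G R1 U).card := Finset.card_pos.mpr ⟨r, hrmem⟩
    have hu : 1 ≤ U.card := Finset.card_pos.mpr ⟨ℓ₁, hℓ₁⟩
    have hbad' : nL + (NBR G R1 (U.erase ℓ₁)).card + 1 ≤ R1.card + (U.erase ℓ₁).card := by omega
    have := hmin _ hbad'
    omega

lemma master_struct {G : Fin nL × Fin nR → Bool} {R1 : Finset (Fin nR)} (hnL : 0 < nL)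
    (hm : R1.card ≤ nL) (h : ¬ HasSatM R1 G) :
    (∃ a, 1 ≤ a ∧ a ≤ nL / 2 + 1 ∧ RightWitness R1 a G) ∨
    (∃ a, 1 ≤ a ∧ a ≤ nL / 2 + 1 ∧ LeftWitness R1 a G) := by
  obtain ⟨S₀, hS₀sub, hS₀⟩ := hall_fail hnL h
  obtain ⟨S, hSsub, ⟨⟨hSbad, hSmin⟩, hSW⟩⟩ := right_struct ⟨S₀, hS₀sub, hS₀⟩
  by_cases hsmall : S.card ≤ nL / 2 + 1
  · exact Or.inl ⟨S.card, by omega, hsmall, hSW⟩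
  · right
    obtain ⟨S', hS'sub, hS'card, T, hT, hnoe, _⟩ := hSW
    -- here S' has the structure; S'.card = S.card
    classical
    set U₀ : Finset (Fin nL) := Finset.univ \ T with hU₀def
    have hTcard : T.card ≤ nL := by
      have := Finset.card_le_card (Finset.subset_univ T)
      simpa using this
    have hU₀card : U₀.card = nL - T.card := by
      rw [hU₀def, Finset.card_sdiff_of_subset (Finset.subset_univ T)]
      simp
    have hscard : S.card ≤ R1.card := Finset.card_le_card hSsub
    have hNsub : NBR G R1 U₀ ⊆ R1 \ S' := by
      intro r hrr
      simp only [NBR, mem_filter] at hrr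
      obtain ⟨hrR1, ℓ, hℓ, he⟩ := hrr
      refine Finset.mem_sdiff.mpr ⟨hrR1, ?_⟩
      intro hrS
      have hℓT : ℓ ∉ T := (Finset.mem_sdiff.mp (hU₀def ▸ hℓ)).2
      have := hnoe r hrS ℓ hℓT
      rw [this] at he
      exact Bool.false_ne_true he
    have hS'R1 : S'.card ≤ R1.card := Finset.card_le_card hS'sub
    have hNcard : (NBR G R1 U₀).card ≤ R1.card - S'.card := by
      calc (NBR G R1 U₀).card ≤ (R1 \ S').card := Finset.card_le_card hNsub
        _ = R1.card - S'.card := Finset.card_sdiff_of_subset hS'sub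
    have hbadU₀ : nL + (NBR G R1 U₀).card + 1 ≤ R1.card + U₀.card := by omega
    obtain ⟨U, hUmin, hUW⟩ := left_struct hm ⟨U₀, hbadU₀⟩
    have hUcard : U.card ≤ U₀.card := hUmin U₀ hbadU₀
    have hU1 : 1 ≤ U.card := by
      obtain ⟨_, _, _, _, hceq, _⟩ := hUW
      omega
    refine ⟨U.card, hU1, ?_, hUW⟩
    omega

end Struct
section UnionBound

variable {nL nR : ℕ} {p : ENNReal} (hp : p ≤ 1)

local notation "μpi" => (Measure.pi fun _ : Fin nL × Fin nR => bern p hp)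

lemma right_union_bound (R1 : Finset (Fin nR)) (a : ℕ) (ha : 1 ≤ a) :
    μpi {G | RightWitness R1 a G} ≤
      ((R1.card.choose a * (nL.choose (a-1)) * (a^2)^(a-1) : ℕ) : ENNReal) *
        (p^(2*(a-1)) * (1-p)^(a * (nL + 1 - a))) := by
  classical
  set 𝒮 := Finset.powersetCard a R1 with h𝒮
  set 𝒯 := Finset.powersetCard (a-1) (Finset.univ : Finset (Fin nL)) with h𝒯
  set Φ : (T : Finset (Fin nL)) → Finset (Fin nR) →
      Finset ((ℓ : Fin nL) → ℓ ∈ T → Fin nR × Fin nR) :=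
    fun T S => T.pi (fun _ => S.offDiag) with hΦ
  set A : Finset (Fin nR) → Finset (Fin nL) → Finset (Fin nL × Fin nR) :=
    fun S T => (Finset.univ \ T) ×ˢ S with hA
  set B : (T : Finset (Fin nL)) → ((ℓ : Fin nL) → ℓ ∈ T → Fin nR × Fin nR) →
      Finset (Fin nL × Fin nR) :=
    fun T φ => T.attach.biUnion fun ℓ =>
      {((ℓ : Fin nL), (φ ℓ.1 ℓ.2).1), ((ℓ : Fin nL), (φ ℓ.1 ℓ.2).2)} with hB
  have hincl : {G | RightWitness R1 a G} ⊆
      ⋃ S ∈ 𝒮, ⋃ T ∈ 𝒯, ⋃ φ ∈ Φ T S, EV (A S T) (B T φ) := by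
    intro G hG
    obtain ⟨S, hSsub, hScard, T, hTcard, hnoe, h2⟩ := hG
    have hS𝒮 : S ∈ 𝒮 := Finset.mem_powersetCard.mpr ⟨hSsub, hScard⟩
    have hT𝒯 : T ∈ 𝒯 := Finset.mem_powersetCard.mpr ⟨Finset.subset_univ _, by omega⟩
    have hchoice : ∀ ℓ ∈ T, ∃ q : Fin nR × Fin nR, q ∈ S.offDiag ∧
        G (ℓ, q.1) = true ∧ G (ℓ, q.2) = true := by
      intro ℓ hℓ
      obtain ⟨r₁, hr₁, r₂, hr₂, hne, he₁, he₂⟩ := h2 ℓ hℓ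
      exact ⟨(r₁, r₂), Finset.mem_offDiag.mpr ⟨hr₁, hr₂, hne⟩, he₁, he₂⟩
    choose q hq1 hq2 hq3 using hchoice
    refine Set.mem_iUnion₂.mpr ⟨S, hS𝒮, Set.mem_iUnion₂.mpr ⟨T, hT𝒯,
      Set.mem_iUnion₂.mpr ⟨q, ?_, ?_, ?_⟩⟩⟩
    · exact Finset.mem_pi.mpr fun ℓ hℓ => hq1 ℓ hℓ
    · intro e he
      simp only [hA, Finset.mem_product, Finset.mem_sdiff, Finset.mem_univ, true_and] at he
      exact hnoe e.2 he.2 e.1 he.1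
    · intro e he
      simp only [hB, Finset.mem_biUnion, Finset.mem_attach, true_and, Finset.mem_insert,
        Finset.mem_singleton] at he
      obtain ⟨ℓ, hcases⟩ := he
      rcases hcases with rfl | rfl
      · exact hq2 ℓ.1 ℓ.2
      · exact hq3 ℓ.1 ℓ.2
  have hEVbound : ∀ S ∈ 𝒮, ∀ T ∈ 𝒯, ∀ φ ∈ Φ T S,
      μpi (EV (A S T) (B T φ)) ≤ p^(2*(a-1)) * (1-p)^(a * (nL + 1 - a)) := by
    intro S hS T hT φ hφ
    have hSsub := (Finset.mem_powersetCard.mp hS).1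
    have hScard := (Finset.mem_powersetCard.mp hS).2
    have hTcard := (Finset.mem_powersetCard.mp hT).2
    have hdisj : Disjoint (A S T) (B T φ) := by
      rw [Finset.disjoint_left]
      intro e heA heB
      simp only [hA, Finset.mem_product, Finset.mem_sdiff, Finset.mem_univ, true_and] at heA
      simp only [hB, Finset.mem_biUnion, Finset.mem_attach, true_and, Finset.mem_insert,
        Finset.mem_singleton] at heB
      obtain ⟨ℓ, hcases⟩ := heB
      rcases hcases with rfl | rfl <;> exact heA.1 ℓ.2
    rw [measure_EV hp _ _ hdisj]
    have hAcard : (A S T).card = (nL + 1 - a) * a := by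
      rw [hA]
      simp only [Finset.card_product, Finset.card_sdiff_of_subset (Finset.subset_univ T),
        Finset.card_univ, Fintype.card_fin]
      have hTle : T.card ≤ nL := by
        simpa using Finset.card_le_card (Finset.subset_univ T)
      rw [hScard, hTcard]
      congr 1
      omega
    have hBcard : (B T φ).card = 2 * (a - 1) := by
      rw [hB, Finset.card_biUnion]
      · have : ∀ ℓ ∈ T.attach,
            ({((ℓ : Fin nL), (φ ℓ.1 ℓ.2).1), ((ℓ : Fin nL), (φ ℓ.1 ℓ.2).2)} :
              Finset (Fin nL × Fin nR)).card = 2 := by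
          intro ℓ _
          rw [Finset.card_insert_of_notMem, Finset.card_singleton]
          simp only [Finset.mem_singleton]
          intro hcon
          have := Finset.mem_pi.mp hφ ℓ.1 ℓ.2
          have hne := (Finset.mem_offDiag.mp this).2.2
          exact hne (congrArg Prod.snd hcon)
        rw [Finset.sum_congr rfl this]
        simp [Finset.card_attach, hTcard, Nat.mul_comm]
      · intro x _ y _ hxy
        simp only [Finset.disjoint_left, Finset.mem_insert, Finset.mem_singleton]
        rintro e (rfl | rfl) (he | he) <;>
          exact hxy (Subtype.ext (congrArg Prod.fst he))
    rw [hAcard, hBcard, mul_comm ((1-p)^_) (p^_), Nat.mul_comm (nL + 1 - a) a]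
  calc μpi {G | RightWitness R1 a G}
      ≤ μpi (⋃ S ∈ 𝒮, ⋃ T ∈ 𝒯, ⋃ φ ∈ Φ T S, EV (A S T) (B T φ)) := measure_mono hincl
    _ ≤ ∑ S ∈ 𝒮, μpi (⋃ T ∈ 𝒯, ⋃ φ ∈ Φ T S, EV (A S T) (B T φ)) :=
        measure_biUnion_finset_le _ _
    _ ≤ ∑ S ∈ 𝒮, ∑ T ∈ 𝒯, μpi (⋃ φ ∈ Φ T S, EV (A S T) (B T φ)) :=
        Finset.sum_le_sum fun S _ => measure_biUnion_finset_le _ _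
    _ ≤ ∑ S ∈ 𝒮, ∑ T ∈ 𝒯, ∑ φ ∈ Φ T S, μpi (EV (A S T) (B T φ)) :=
        Finset.sum_le_sum fun S _ => Finset.sum_le_sum fun T _ => measure_biUnion_finset_le _ _
    _ ≤ ∑ S ∈ 𝒮, ∑ T ∈ 𝒯, ∑ φ ∈ Φ T S, (p^(2*(a-1)) * (1-p)^(a * (nL + 1 - a))) :=
        Finset.sum_le_sum fun S hS => Finset.sum_le_sum fun T hT =>
          Finset.sum_le_sum fun φ hφ => hEVbound S hS T hT φ hφ
    _ ≤ ((R1.card.choose a * (nL.choose (a-1)) * (a^2)^(a-1) : ℕ) : ENNReal) *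
        (p^(2*(a-1)) * (1-p)^(a * (nL + 1 - a))) := by
        rw [Finset.sum_congr rfl (fun S hS => Finset.sum_congr rfl fun T hT =>
          Finset.sum_const _)]
        have hcardΦ : ∀ S ∈ 𝒮, ∀ T ∈ 𝒯, (Φ T S).card ≤ (a^2)^(a-1) := by
          intro S hS T hT
          have hScard := (Finset.mem_powersetCard.mp hS).2
          have hTcard := (Finset.mem_powersetCard.mp hT).2
          rw [hΦ, Finset.card_pi]
          calc ∏ _ℓ ∈ T, S.offDiag.card = S.offDiag.card ^ T.card := by
                rw [Finset.prod_const]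
            _ ≤ (a^2)^(a-1) := by
                rw [Finset.offDiag_card, hScard, hTcard]
                exact Nat.pow_le_pow_left (by rw [pow_two]; omega) _
        calc ∑ S ∈ 𝒮, ∑ T ∈ 𝒯, (Φ T S).card • (p^(2*(a-1)) * (1-p)^(a * (nL + 1 - a)))
            ≤ ∑ _S ∈ 𝒮, ∑ _T ∈ 𝒯, ((a^2)^(a-1) : ℕ) •
              (p^(2*(a-1)) * (1-p)^(a * (nL + 1 - a))) := by
              refine Finset.sum_le_sum fun S hS => Finset.sum_le_sum fun T hT => ?_
              exact smul_le_smul_of_nonneg_right (hcardΦ S hS T hT) zero_le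
          _ = ((R1.card.choose a * (nL.choose (a-1)) * (a^2)^(a-1) : ℕ) : ENNReal) *
              (p^(2*(a-1)) * (1-p)^(a * (nL + 1 - a))) := by
              rw [Finset.sum_const, Finset.sum_const, h𝒮, h𝒯,
                Finset.card_powersetCard, Finset.card_powersetCard]
              simp only [smul_smul, nsmul_eq_mul, Finset.card_univ, Fintype.card_fin]
              push_cast
              ring

end UnionBound
section UnionBoundL

variable {nL nR : ℕ} {p : ENNReal} (hp : p ≤ 1)

local notation "μpi" => (Measure.pi fun _ : Fin nL × Fin nR => bern p hp)

lemma left_union_bound (R1 : Finset (Fin nR)) (a : ℕ) (ha : 1 ≤ a) :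
    μpi {G | LeftWitness R1 a G} ≤
      ((nL.choose a * (R1.card.choose (R1.card + a - (nL+1))) *
          (a^2)^(R1.card + a - (nL+1)) : ℕ) : ENNReal) *
        (p^(2*(R1.card + a - (nL+1))) * (1-p)^(a * (nL + 1 - a))) := by
  classical
  by_cases hrange : nL + 1 ≤ R1.card + a
  swap
  · have : {G : Fin nL × Fin nR → Bool | LeftWitness R1 a G} = ∅ := by
      ext G
      simp only [Set.mem_setOf_eq, Set.mem_empty_iff_false, iff_false]
      rintro ⟨U, hU, T, hTsub, heq, _⟩
      omega
    rw [this]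
    simp
  set b := R1.card + a - (nL+1) with hb
  set 𝒮 := Finset.powersetCard a (Finset.univ : Finset (Fin nL)) with h𝒮
  set 𝒯 := Finset.powersetCard b R1 with h𝒯
  set Φ : (T : Finset (Fin nR)) → Finset (Fin nL) →
      Finset ((r : Fin nR) → r ∈ T → Fin nL × Fin nL) :=
    fun T U => T.pi (fun _ => U.offDiag) with hΦ
  set A : Finset (Fin nL) → Finset (Fin nR) → Finset (Fin nL × Fin nR) :=
    fun U T => U ×ˢ (R1 \ T) with hA
  set B : (T : Finset (Fin nR)) → ((r : Fin nR) → r ∈ T → Fin nL × Fin nL) →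
      Finset (Fin nL × Fin nR) :=
    fun T φ => T.attach.biUnion fun r =>
      {((φ r.1 r.2).1, (r : Fin nR)), ((φ r.1 r.2).2, (r : Fin nR))} with hB
  have hincl : {G | LeftWitness R1 a G} ⊆
      ⋃ U ∈ 𝒮, ⋃ T ∈ 𝒯, ⋃ φ ∈ Φ T U, EV (A U T) (B T φ) := by
    intro G hG
    obtain ⟨U, hUcard, T, hTsub, heq, hnoe, h2⟩ := hG
    have hU𝒮 : U ∈ 𝒮 := Finset.mem_powersetCard.mpr ⟨Finset.subset_univ _, hUcard⟩
    have hT𝒯 : T ∈ 𝒯 := Finset.mem_powersetCard.mpr ⟨hTsub, by omega⟩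
    have hchoice : ∀ r ∈ T, ∃ q : Fin nL × Fin nL, q ∈ U.offDiag ∧
        G (q.1, r) = true ∧ G (q.2, r) = true := by
      intro r hr
      obtain ⟨ℓ₁, hℓ₁, ℓ₂, hℓ₂, hne, he₁, he₂⟩ := h2 r hr
      exact ⟨(ℓ₁, ℓ₂), Finset.mem_offDiag.mpr ⟨hℓ₁, hℓ₂, hne⟩, he₁, he₂⟩
    choose q hq1 hq2 hq3 using hchoice
    refine Set.mem_iUnion₂.mpr ⟨U, hU𝒮, Set.mem_iUnion₂.mpr ⟨T, hT𝒯,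
      Set.mem_iUnion₂.mpr ⟨q, ?_, ?_, ?_⟩⟩⟩
    · exact Finset.mem_pi.mpr fun r hr => hq1 r hr
    · intro e he
      simp only [hA, Finset.mem_product, Finset.mem_sdiff] at he
      exact hnoe e.1 he.1 e.2 he.2.1 he.2.2
    · intro e he
      simp only [hB, Finset.mem_biUnion, Finset.mem_attach, true_and, Finset.mem_insert,
        Finset.mem_singleton] at he
      obtain ⟨r, hcases⟩ := he
      rcases hcases with rfl | rfl
      · exact hq2 r.1 r.2
      · exact hq3 r.1 r.2
  have hEVbound : ∀ U ∈ 𝒮, ∀ T ∈ 𝒯, ∀ φ ∈ Φ T U,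
      μpi (EV (A U T) (B T φ)) ≤ p^(2*b) * (1-p)^(a * (nL + 1 - a)) := by
    intro U hU T hT φ hφ
    have hUcard := (Finset.mem_powersetCard.mp hU).2
    have hTsub := (Finset.mem_powersetCard.mp hT).1
    have hTcard := (Finset.mem_powersetCard.mp hT).2
    have hdisj : Disjoint (A U T) (B T φ) := by
      rw [Finset.disjoint_left]
      intro e heA heB
      simp only [hA, Finset.mem_product, Finset.mem_sdiff] at heA
      simp only [hB, Finset.mem_biUnion, Finset.mem_attach, true_and, Finset.mem_insert,
        Finset.mem_singleton] at heB
      obtain ⟨r, hcases⟩ := heB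
      rcases hcases with rfl | rfl <;> exact heA.2.2 r.2
    rw [measure_EV hp _ _ hdisj]
    have hmle : R1.card ≤ nR := by
      simpa using Finset.card_le_card (Finset.subset_univ R1)
    have hale : a ≤ nL := by
      rw [← hUcard]
      simpa using Finset.card_le_card (Finset.subset_univ U)
    have hAcard : (A U T).card = a * (nL + 1 - a) := by
      rw [hA]
      simp only [Finset.card_product, Finset.card_sdiff_of_subset hTsub]
      rw [hUcard, hTcard]
      congr 1
      omega
    have hBcard : (B T φ).card = 2 * b := by
      rw [hB, Finset.card_biUnion]
      · have : ∀ r ∈ T.attach,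
            ({((φ r.1 r.2).1, (r : Fin nR)), ((φ r.1 r.2).2, (r : Fin nR))} :
              Finset (Fin nL × Fin nR)).card = 2 := by
          intro r _
          rw [Finset.card_insert_of_notMem, Finset.card_singleton]
          simp only [Finset.mem_singleton]
          intro hcon
          have := Finset.mem_pi.mp hφ r.1 r.2
          have hne := (Finset.mem_offDiag.mp this).2.2
          exact hne (congrArg Prod.fst hcon)
        rw [Finset.sum_congr rfl this]
        simp [Finset.card_attach, hTcard, Nat.mul_comm]
      · intro x _ y _ hxy
        simp only [Finset.disjoint_left, Finset.mem_insert, Finset.mem_singleton]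
        rintro e (rfl | rfl) (he | he) <;>
          exact hxy (Subtype.ext (congrArg Prod.snd he))
    rw [hAcard, hBcard, mul_comm ((1-p)^_) (p^_)]
  calc μpi {G | LeftWitness R1 a G}
      ≤ μpi (⋃ U ∈ 𝒮, ⋃ T ∈ 𝒯, ⋃ φ ∈ Φ T U, EV (A U T) (B T φ)) := measure_mono hincl
    _ ≤ ∑ U ∈ 𝒮, μpi (⋃ T ∈ 𝒯, ⋃ φ ∈ Φ T U, EV (A U T) (B T φ)) :=
        measure_biUnion_finset_le _ _
    _ ≤ ∑ U ∈ 𝒮, ∑ T ∈ 𝒯, μpi (⋃ φ ∈ Φ T U, EV (A U T) (B T φ)) :=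
        Finset.sum_le_sum fun U _ => measure_biUnion_finset_le _ _
    _ ≤ ∑ U ∈ 𝒮, ∑ T ∈ 𝒯, ∑ φ ∈ Φ T U, μpi (EV (A U T) (B T φ)) :=
        Finset.sum_le_sum fun U _ => Finset.sum_le_sum fun T _ => measure_biUnion_finset_le _ _
    _ ≤ ∑ U ∈ 𝒮, ∑ T ∈ 𝒯, ∑ φ ∈ Φ T U, (p^(2*b) * (1-p)^(a * (nL + 1 - a))) :=
        Finset.sum_le_sum fun U hU => Finset.sum_le_sum fun T hT =>
          Finset.sum_le_sum fun φ hφ => hEVbound U hU T hT φ hφ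
    _ ≤ ((nL.choose a * (R1.card.choose b) * (a^2)^b : ℕ) : ENNReal) *
        (p^(2*b) * (1-p)^(a * (nL + 1 - a))) := by
        rw [Finset.sum_congr rfl (fun U hU => Finset.sum_congr rfl fun T hT =>
          Finset.sum_const _)]
        have hcardΦ : ∀ U ∈ 𝒮, ∀ T ∈ 𝒯, (Φ T U).card ≤ (a^2)^b := by
          intro U hU T hT
          have hUcard := (Finset.mem_powersetCard.mp hU).2
          have hTcard := (Finset.mem_powersetCard.mp hT).2
          rw [hΦ, Finset.card_pi]
          calc ∏ _r ∈ T, U.offDiag.card = U.offDiag.card ^ T.card := by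
                rw [Finset.prod_const]
            _ ≤ (a^2)^b := by
                rw [Finset.offDiag_card, hUcard, hTcard]
                exact Nat.pow_le_pow_left (by rw [pow_two]; omega) _
        calc ∑ U ∈ 𝒮, ∑ T ∈ 𝒯, (Φ T U).card • (p^(2*b) * (1-p)^(a * (nL + 1 - a)))
            ≤ ∑ _U ∈ 𝒮, ∑ _T ∈ 𝒯, ((a^2)^b : ℕ) • (p^(2*b) * (1-p)^(a * (nL + 1 - a))) := by
              refine Finset.sum_le_sum fun U hU => Finset.sum_le_sum fun T hT => ?_
              exact smul_le_smul_of_nonneg_right (hcardΦ U hU T hT) zero_le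
          _ = ((nL.choose a * (R1.card.choose b) * (a^2)^b : ℕ) : ENNReal) *
              (p^(2*b) * (1-p)^(a * (nL + 1 - a))) := by
              rw [Finset.sum_const, Finset.sum_const, h𝒮, h𝒯,
                Finset.card_powersetCard, Finset.card_powersetCard]
              simp only [smul_smul, nsmul_eq_mul, Finset.card_univ, Fintype.card_fin]
              push_cast
              ring

end UnionBoundL
section RealHelpers

open Real

lemma pow_self_le_exp_mul_factorial : ∀ k : ℕ, (k:ℝ)^k ≤ (Real.exp 1)^k * k.factorial := by
  intro k
  induction k with
  | zero => simp
  | succ k ih =>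
    have hk : ((k+1:ℕ):ℝ)^(k+1) = ((k:ℝ)+1)^k * ((k:ℝ)+1) := by
      push_cast; rw [pow_succ]
    have key : ((k:ℝ)+1)^k ≤ Real.exp 1 * (k:ℝ)^k := by
      rcases Nat.eq_zero_or_pos k with rfl | hkpos
      · have h1 : (1:ℝ) ≤ Real.exp 1 := by nlinarith [Real.exp_one_gt_d9]
        simpa using h1
      · have hkR : (0:ℝ) < k := by exact_mod_cast hkpos
        have h1 : ((k:ℝ)+1) = (k:ℝ) * (1 + 1/(k:ℝ)) := by field_simp
        have h2 : (1 + 1/(k:ℝ)) ≤ Real.exp (1/(k:ℝ)) := by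
          have := Real.add_one_le_exp (1/(k:ℝ)); linarith
        have h3 : ((k:ℝ)+1)^k = (k:ℝ)^k * (1 + 1/(k:ℝ))^k := by
          rw [h1, mul_pow]
        have h4 : (1 + 1/(k:ℝ))^k ≤ (Real.exp (1/(k:ℝ)))^k := by
          apply pow_le_pow_left₀ (by positivity) h2
        have h5 : (Real.exp (1/(k:ℝ)))^k = Real.exp ((k:ℝ) * (1/(k:ℝ))) := by
          rw [← Real.exp_nat_mul]
        have h6 : (k:ℝ) * (1/(k:ℝ)) = 1 := by field_simp
        rw [h3]
        have h7 : (1 + 1/(k:ℝ))^k ≤ Real.exp 1 := by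
          calc (1 + 1/(k:ℝ))^k ≤ (Real.exp (1/(k:ℝ)))^k := h4
            _ = Real.exp ((k:ℝ) * (1/(k:ℝ))) := h5
            _ = Real.exp 1 := by rw [h6]
        calc (k:ℝ)^k * (1 + 1/(k:ℝ))^k ≤ (k:ℝ)^k * Real.exp 1 :=
              mul_le_mul_of_nonneg_left h7 (by positivity)
          _ = Real.exp 1 * (k:ℝ)^k := by ring
    calc ((k+1:ℕ):ℝ)^(k+1) = ((k:ℝ)+1)^k * ((k:ℝ)+1) := hk
      _ ≤ (Real.exp 1 * (k:ℝ)^k) * ((k:ℝ)+1) := by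
          apply mul_le_mul_of_nonneg_right key (by positivity)
      _ ≤ (Real.exp 1 * ((Real.exp 1)^k * k.factorial)) * ((k:ℝ)+1) := by
          have := mul_le_mul_of_nonneg_left ih (le_of_lt (Real.exp_pos 1))
          apply mul_le_mul_of_nonneg_right _ (by positivity)
          exact this
      _ = (Real.exp 1)^(k+1) * ((k+1).factorial) := by
          rw [Nat.factorial_succ]
          push_cast
          ring

lemma choose_le_pow_real (N k : ℕ) (hk : 1 ≤ k) :
    (N.choose k : ℝ) ≤ (Real.exp 1 * N / k)^k := by
  have h1 : (N.choose k : ℝ) * (k.factorial) ≤ (N:ℝ)^k := by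
    have := Nat.descFactorial_le_pow N k
    have h2 : N.descFactorial k = k.factorial * N.choose k := Nat.descFactorial_eq_factorial_mul_choose N k
    have : (k.factorial * N.choose k : ℕ) ≤ N^k := by rw [← h2]; exact this
    calc (N.choose k : ℝ) * (k.factorial) = ((k.factorial * N.choose k : ℕ) : ℝ) := by push_cast; ring
      _ ≤ ((N^k : ℕ):ℝ) := by exact_mod_cast this
      _ = (N:ℝ)^k := by push_cast; ring
  have hkpos : (0:ℝ) < k := by exact_mod_cast hk
  have hfacpos : (0:ℝ) < k.factorial := by exact_mod_cast k.factorial_pos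
  have hkk : (k:ℝ)^k ≤ (Real.exp 1)^k * k.factorial := pow_self_le_exp_mul_factorial k
  have hkkpos : (0:ℝ) < (k:ℝ)^k := by positivity
  rw [div_pow, mul_pow]
  rw [le_div_iff₀ hkkpos]
  calc (N.choose k : ℝ) * (k:ℝ)^k ≤ (N.choose k : ℝ) * ((Real.exp 1)^k * k.factorial) := by
        apply mul_le_mul_of_nonneg_left hkk (by positivity)
    _ = ((N.choose k : ℝ) * k.factorial) * (Real.exp 1)^k := by ring
    _ ≤ (N:ℝ)^k * (Real.exp 1)^k := by
        apply mul_le_mul_of_nonneg_right h1 (by positivity)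
    _ = Real.exp 1 ^k * (N:ℝ)^k := by ring

lemma le_exp_32 (x : ℝ) (hx : 0 ≤ x) : x ≤ Real.exp (x/32 + 3) := by
  have h1 : x/32 ≤ Real.exp (x/32 - 1) := by
    have := Real.add_one_le_exp (x/32 - 1); linarith
  have h2 : x ≤ 32 * Real.exp (x/32 - 1) := by linarith
  have h3 : (32:ℝ) ≤ Real.exp 4 := by
    have h := Real.exp_one_gt_d9
    have h4 : ((2.7182818283:ℝ))^(4:ℕ) ≤ (Real.exp 1)^(4:ℕ) :=
      pow_le_pow_left₀ (by norm_num) (le_of_lt h) 4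
    have h5 : (Real.exp 1)^(4:ℕ) = Real.exp 4 := by
      rw [← Real.exp_nat_mul]; norm_num
    have h6 : (32:ℝ) ≤ ((2.7182818283:ℝ))^(4:ℕ) := by norm_num
    rw [← h5]; exact h6.trans h4
  calc x ≤ 32 * Real.exp (x/32 - 1) := h2
    _ ≤ Real.exp 4 * Real.exp (x/32 - 1) := by
        apply mul_le_mul_of_nonneg_right h3 (le_of_lt (Real.exp_pos _))
    _ = Real.exp (x/32 + 3) := by rw [← Real.exp_add]; ring_nf

lemma one_sub_min_le_exp (lam : ℝ) (hlam : 0 ≤ lam) : 1 - min lam 1 ≤ Real.exp (-lam) := by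
  rcases le_total lam 1 with h | h
  · rw [min_eq_left h]
    have := Real.add_one_le_exp (-lam); linarith
  · rw [min_eq_right h]; simp [le_of_lt (Real.exp_pos _)]

end RealHelpers
section Analytic

open Real

lemma sixtyfour_le_exp_five : (64:ℝ) ≤ Real.exp 5 := by
  have h := Real.exp_one_gt_d9
  have h4 : ((2.7182818283:ℝ))^(5:ℕ) ≤ (Real.exp 1)^(5:ℕ) :=
    pow_le_pow_left₀ (by norm_num) (le_of_lt h) 5
  have h5 : (Real.exp 1)^(5:ℕ) = Real.exp 5 := by
    rw [← Real.exp_nat_mul]; norm_num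
  have h6 : (64:ℝ) ≤ ((2.7182818283:ℝ))^(5:ℕ) := by norm_num
  rw [← h5]; exact h6.trans h4

lemma div_pow_le_exp (a : ℝ) (b : ℕ) (ha : 0 ≤ a) (hb : 1 ≤ b) :
    (a / b)^b ≤ Real.exp (a - b) := by
  have hbR : (0:ℝ) < b := by exact_mod_cast hb
  have h1 : a / b ≤ Real.exp (a/b - 1) := by
    have := Real.add_one_le_exp (a/b - 1); linarith
  calc (a/b)^b ≤ (Real.exp (a/b - 1))^b := pow_le_pow_left₀ (by positivity) h1 b
    _ = Real.exp ((b:ℝ) * (a/b - 1)) := (Real.exp_nat_mul _ b).symm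
    _ = Real.exp (a - b) := by congr 1; field_simp

set_option maxHeartbeats 2000000 in
lemma analytic_bound (n nl n₁ n₂ a b : ℕ) (c : ℝ)
    (hc : 10 ≤ c) (hlog : 200 ≤ Real.log n)
    (hnl1 : (n:ℝ)/2 ≤ (nl:ℝ)) (hnl2 : nl ≤ n)
    (hn₁ : n₁ ≤ n) (hn₂ : n₂ ≤ n)
    (ha : 1 ≤ a) (haK : a ≤ nl/2 + 1)
    (hb : b + 1 ≤ a) :
    (n₁.choose a : ℝ) * (n₂.choose b : ℝ) * (((a:ℝ))^2)^b *
        (min (2*(Real.log n + c)/n) 1)^(2*b) *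
        (1 - min (2*(Real.log n + c)/n) 1)^(a * (nl + 1 - a)) ≤
      (Real.exp (9 - c) + Real.exp (-(Real.log n)/4))^a := by
  have hn0 : 0 < n := by
    by_contra h
    push_neg at h
    interval_cases n
    simp [Real.log_zero] at hlog; linarith
  have hnR1 : (1:ℝ) ≤ n := by exact_mod_cast hn0
  have hnRpos : (0:ℝ) < n := by linarith
  have hnbig : (190:ℝ) ≤ n := by
    have h1 : Real.log n ≤ n - 1 := Real.log_le_sub_one_of_pos hnRpos
    linarith
  set L : ℝ := Real.log n + c with hLdef
  have hL200 : 210 ≤ L := by rw [hLdef]; linarith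
  have hL1 : (1:ℝ) ≤ L := by linarith
  have hLpos : (0:ℝ) < L := by linarith
  set lam : ℝ := 2 * (Real.log n + c) / n with hlamdef
  have hlamL : lam = 2 * L / n := by rw [hlamdef, hLdef]
  have hlam0 : 0 ≤ lam := by rw [hlamL]; positivity
  set pr : ℝ := min lam 1 with hprdef
  have hpr0 : 0 ≤ pr := le_min hlam0 zero_le_one
  have hpr1 : pr ≤ 1 := min_le_right _ _
  have hprlam : pr ≤ lam := min_le_left _ _
  have hq0 : 0 ≤ 1 - pr := by linarith
  have hqe : 1 - pr ≤ Real.exp (-lam) := one_sub_min_le_exp lam hlam0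
  have haR : (1:ℝ) ≤ a := by exact_mod_cast ha
  have haRpos : (0:ℝ) < a := by linarith
  have hanl : a ≤ nl + 1 := by omega
  have haKR : (a:ℝ) ≤ (nl:ℝ)/2 + 1 := by
    have h1 : (a:ℝ) ≤ ((nl/2 + 1 : ℕ):ℝ) := by exact_mod_cast haK
    have h2 : ((nl/2 : ℕ):ℝ) ≤ (nl:ℝ)/2 := by
      rw [le_div_iff₀ (by norm_num)]
      exact_mod_cast Nat.div_mul_le_self nl 2
    push_cast at h1
    linarith
  have hnlR : (nl:ℝ) ≤ n := by exact_mod_cast hnl2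
  have han : (a:ℝ) ≤ n := by
    have : (nl:ℝ)/2 + 1 ≤ n := by linarith
    linarith
  set M : ℕ := a * (nl + 1 - a) with hMdef
  have hMcast : (M:ℝ) = (a:ℝ) * ((nl:ℝ) + 1 - (a:ℝ)) := by
    rw [hMdef]
    push_cast [Nat.cast_sub hanl]
    ring
  have hMterm : (0:ℝ) ≤ (nl:ℝ) + 1 - a := by
    have h2 : (a:ℝ) ≤ (nl:ℝ) + 1 := by linarith
    linarith
  have hqM : (1 - pr)^M ≤ Real.exp (-(lam * (M:ℝ))) := by
    calc (1 - pr)^M ≤ (Real.exp (-lam))^M := pow_le_pow_left₀ hq0 hqe M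
      _ = Real.exp ((M:ℝ) * (-lam)) := (Real.exp_nat_mul _ M).symm
      _ = Real.exp (-(lam * (M:ℝ))) := by ring_nf
  have htheta1 : Real.exp (9 - c) ≤ Real.exp (9 - c) + Real.exp (-(Real.log n)/4) :=
    le_add_of_nonneg_right (le_of_lt (Real.exp_pos _))
  have htheta2 : Real.exp (-(Real.log n)/4) ≤ Real.exp (9 - c) + Real.exp (-(Real.log n)/4) :=
    le_add_of_nonneg_left (le_of_lt (Real.exp_pos _))
  have hLHSeq : (n₁.choose a : ℝ) * (n₂.choose b : ℝ) * (((a:ℝ))^2)^b *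
        pr^(2*b) * (1 - pr)^M
      = (n₁.choose a : ℝ) * ((n₂.choose b : ℝ) * ((((a:ℝ))^2)^b * pr^(2*b))) *
        ((1 - pr)^M) := by ring
  by_cases hcase : 16 * L^2 * (a:ℝ) ≤ n
  · -- SMALL CASE
    have hB1 : (n₁.choose a : ℝ) ≤ (Real.exp 1 * n / a)^a := by
      calc (n₁.choose a : ℝ) ≤ (Real.exp 1 * n₁ / a)^a := choose_le_pow_real n₁ a ha
        _ ≤ (Real.exp 1 * n / a)^a := by
            have hcast : (n₁:ℝ) ≤ (n:ℝ) := by exact_mod_cast hn₁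
            gcongr
    have hB2 : (n₂.choose b : ℝ) * ((((a:ℝ))^2)^b * pr^(2*b)) ≤ Real.exp ((a:ℝ)/4) := by
      rcases Nat.eq_zero_or_pos b with rfl | hbpos
      · simp only [Nat.choose_zero_right, Nat.cast_one, pow_zero, Nat.mul_zero, mul_one, one_mul]
        exact Real.one_le_exp (by positivity)
      · have hbR : (1:ℝ) ≤ b := by exact_mod_cast hbpos
        have hbRpos : (0:ℝ) < b := by linarith
        have step1 : (n₂.choose b : ℝ) ≤ (Real.exp 1 * n / b)^b := by
          calc (n₂.choose b : ℝ) ≤ (Real.exp 1 * n₂ / b)^b := choose_le_pow_real n₂ b hbpos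
            _ ≤ (Real.exp 1 * n / b)^b := by
                have hcast : (n₂:ℝ) ≤ (n:ℝ) := by exact_mod_cast hn₂
                gcongr
        have step2 : pr^(2*b) ≤ lam^(2*b) := pow_le_pow_left₀ hpr0 hprlam _
        have key : (Real.exp 1 * n / b) * ((a:ℝ)^2 * lam^2) ≤ Real.exp 1 * ((a:ℝ)/(4*b)) := by
          rw [hlamL]
          have heq : (Real.exp 1 * n / b) * ((a:ℝ)^2 * (2*L/n)^2)
              = (Real.exp 1 * ((a:ℝ)/(4*b))) * (16 * L^2 * a / n) := by
            field_simp
            ring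
          rw [heq]
          have h16 : 16 * L^2 * (a:ℝ) / n ≤ 1 := by
            rw [div_le_one hnRpos]; exact hcase
          calc (Real.exp 1 * ((a:ℝ)/(4*b))) * (16 * L^2 * a / n)
              ≤ (Real.exp 1 * ((a:ℝ)/(4*b))) * 1 := by
                apply mul_le_mul_of_nonneg_left h16 (by positivity)
            _ = Real.exp 1 * ((a:ℝ)/(4*b)) := by ring
        calc (n₂.choose b : ℝ) * ((((a:ℝ))^2)^b * pr^(2*b))
            ≤ (Real.exp 1 * n / b)^b * ((((a:ℝ))^2)^b * lam^(2*b)) := by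
              apply mul_le_mul step1 ?_ (by positivity) (by positivity)
              exact mul_le_mul_of_nonneg_left step2 (by positivity)
          _ = ((Real.exp 1 * n / b) * ((a:ℝ)^2 * lam^2))^b := by
              rw [mul_pow, mul_pow, pow_mul]
          _ ≤ (Real.exp 1 * ((a:ℝ)/(4*b)))^b := by
              apply pow_le_pow_left₀ (by positivity) key
          _ = (Real.exp 1)^b * (((a:ℝ)/4) / b)^b := by
              rw [mul_pow]
              congr 2
              field_simp
          _ ≤ Real.exp b * Real.exp ((a:ℝ)/4 - b) := by
              apply mul_le_mul ?_ (div_pow_le_exp _ b (by positivity) hbpos)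
                (by positivity) (by positivity)
              rw [← Real.exp_nat_mul]
              simp
          _ = Real.exp ((a:ℝ)/4) := by rw [← Real.exp_add]; congr 1; ring
    have hkill : (a:ℝ) * L - (a:ℝ)/8 ≤ lam * (M:ℝ) := by
      rw [hlamL, hMcast]
      have h1 : (n:ℝ)/2 + 1 - a ≤ (nl:ℝ) + 1 - a := by linarith
      have h2 : 2 * L / n * ((a:ℝ) * ((nl:ℝ) + 1 - a)) ≥ 2 * L / n * ((a:ℝ) * ((n:ℝ)/2 - a)) := by
        apply mul_le_mul_of_nonneg_left ?_ (by positivity)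
        apply mul_le_mul_of_nonneg_left ?_ (by positivity)
        linarith
      have h3 : 2 * L / n * ((a:ℝ) * ((n:ℝ)/2 - a)) = (a:ℝ) * L - 2 * L * a^2 / n := by
        field_simp
      have h4 : 2 * L * (a:ℝ)^2 / n ≤ (a:ℝ)/8 := by
        rw [div_le_div_iff₀ hnRpos (by norm_num : (0:ℝ) < 8)]
        have hLL : L ≤ L^2 := by nlinarith
        have h7 : 16 * L * (a:ℝ) ≤ 16 * L^2 * a := by
          nlinarith [mul_nonneg haRpos.le (sub_nonneg.mpr hLL)]
        have h8 : 16 * L * (a:ℝ) ≤ n := h7.trans hcase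
        nlinarith [mul_le_mul_of_nonneg_left h8 haRpos.le]
      linarith
    have hexpmono : Real.exp (-(lam * (M:ℝ))) ≤ Real.exp (-((a:ℝ) * L) + (a:ℝ)/8) :=
      Real.exp_le_exp.mpr (by linarith)
    -- combine
    rw [hLHSeq]
    have hcombine : (n₁.choose a : ℝ) * ((n₂.choose b : ℝ) * ((((a:ℝ))^2)^b * pr^(2*b))) *
          ((1 - pr)^M)
        ≤ (Real.exp 1 * n / a)^a * Real.exp ((a:ℝ)/4) * Real.exp (-((a:ℝ) * L) + (a:ℝ)/8) := by
      apply mul_le_mul ?_ (hqM.trans hexpmono) (by positivity) (by positivity)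
      exact mul_le_mul hB1 hB2 (by positivity) (by positivity)
    refine hcombine.trans ?_
    have hsplit : Real.exp (-((a:ℝ) * L) + (a:ℝ)/8)
        = Real.exp (-((a:ℝ) * Real.log n)) * Real.exp (-((a:ℝ) * c)) * Real.exp ((a:ℝ)/8) := by
      rw [← Real.exp_add, ← Real.exp_add]
      congr 1
      rw [hLdef]
      ring
    have hpow1 : (Real.exp 1 * n / a)^a * Real.exp (-((a:ℝ) * Real.log n))
        = (Real.exp 1 / a)^a := by
      have h1 : Real.exp (-((a:ℝ) * Real.log n)) = (Real.exp (-Real.log n))^a := by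
        rw [← Real.exp_nat_mul]; congr 1; ring
      have h2 : Real.exp (-Real.log n) = 1/(n:ℝ) := by
        rw [Real.exp_neg, Real.exp_log hnRpos]; ring
      rw [h1, h2, ← mul_pow]
      congr 1
      field_simp
    have hpow2 : (Real.exp 1 / a)^a ≤ Real.exp a := by
      calc (Real.exp 1 / a)^a ≤ (Real.exp 1)^a := by
            apply pow_le_pow_left₀ (by positivity)
            calc Real.exp 1 / a ≤ Real.exp 1 / 1 := by
                  apply div_le_div_of_nonneg_left (by positivity) (by norm_num) haR
              _ = Real.exp 1 := by ring
        _ = Real.exp a := by rw [← Real.exp_nat_mul]; congr 1; ring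
    calc (Real.exp 1 * n / a)^a * Real.exp ((a:ℝ)/4) * Real.exp (-((a:ℝ) * L) + (a:ℝ)/8)
        = ((Real.exp 1 * n / a)^a * Real.exp (-((a:ℝ) * Real.log n))) *
          (Real.exp ((a:ℝ)/4) * Real.exp (-((a:ℝ) * c)) * Real.exp ((a:ℝ)/8)) := by
          rw [hsplit]; ring
      _ ≤ Real.exp a * (Real.exp ((a:ℝ)/4) * Real.exp (-((a:ℝ) * c)) * Real.exp ((a:ℝ)/8)) := by
          apply mul_le_mul_of_nonneg_right (hpow1 ▸ hpow2) (by positivity)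
      _ = Real.exp ((a:ℝ) * (1 + 1/4 + 1/8 - c)) := by
          rw [← Real.exp_add, ← Real.exp_add, ← Real.exp_add]
          congr 1
          push_cast
          ring
      _ ≤ Real.exp ((a:ℝ) * (9 - c)) := by
          apply Real.exp_le_exp.mpr
          have : (0:ℝ) ≤ (a:ℝ) * (9 - (1 + 1/4 + 1/8)) := by positivity
          nlinarith
      _ = (Real.exp (9 - c))^a := (Real.exp_nat_mul _ a).symm ▸ rfl
      _ ≤ (Real.exp (9 - c) + Real.exp (-(Real.log n)/4))^a :=
          pow_le_pow_left₀ (by positivity) htheta1 a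
  · -- LARGE CASE
    push_neg at hcase
    have hna : (n:ℝ)/a < 16 * L^2 := by
      rw [div_lt_iff₀ haRpos]
      nlinarith
    have hB1 : (n₁.choose a : ℝ) ≤ (Real.exp 1 * (16 * L^2))^a := by
      calc (n₁.choose a : ℝ) ≤ (Real.exp 1 * n₁ / a)^a := choose_le_pow_real n₁ a ha
        _ ≤ (Real.exp 1 * (16 * L^2))^a := by
            apply pow_le_pow_left₀ (by positivity)
            have h1 : Real.exp 1 * (n₁:ℝ) / a ≤ Real.exp 1 * (n:ℝ) / a := by
              have hcast : (n₁:ℝ) ≤ (n:ℝ) := by exact_mod_cast hn₁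
              gcongr
            have h2 : Real.exp 1 * (n:ℝ) / a = Real.exp 1 * ((n:ℝ)/a) := by ring
            refine h1.trans ?_
            rw [h2]
            exact mul_le_mul_of_nonneg_left (le_of_lt hna) (by positivity)
    have h4eL : (1:ℝ) ≤ 4 * Real.exp 1 * L^2 := by
      nlinarith [Real.exp_one_gt_d9]
    have hB2 : (n₂.choose b : ℝ) * ((((a:ℝ))^2)^b * pr^(2*b))
        ≤ (4 * Real.exp 1 * L^2)^a * Real.exp a := by
      rcases Nat.eq_zero_or_pos b with rfl | hbpos
      · simp only [Nat.choose_zero_right, Nat.cast_one, pow_zero, Nat.mul_zero, mul_one, one_mul]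
        calc (1:ℝ) ≤ (4 * Real.exp 1 * L^2)^a := by
              calc (1:ℝ) = 1^a := (one_pow a).symm
                _ ≤ (4 * Real.exp 1 * L^2)^a := pow_le_pow_left₀ (by norm_num) h4eL a
          _ = (4 * Real.exp 1 * L^2)^a * 1 := by ring
          _ ≤ (4 * Real.exp 1 * L^2)^a * Real.exp a :=
              mul_le_mul_of_nonneg_left (Real.one_le_exp (by positivity)) (by positivity)
      · have hbR : (1:ℝ) ≤ b := by exact_mod_cast hbpos
        have hbRpos : (0:ℝ) < b := by linarith
        have step1 : (n₂.choose b : ℝ) ≤ (Real.exp 1 * n / b)^b := by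
          calc (n₂.choose b : ℝ) ≤ (Real.exp 1 * n₂ / b)^b := choose_le_pow_real n₂ b hbpos
            _ ≤ (Real.exp 1 * n / b)^b := by
                have hcast : (n₂:ℝ) ≤ (n:ℝ) := by exact_mod_cast hn₂
                gcongr
        have step2 : pr^(2*b) ≤ lam^(2*b) := pow_le_pow_left₀ hpr0 hprlam _
        have key : (Real.exp 1 * n / b) * ((a:ℝ)^2 * lam^2)
            ≤ (4 * Real.exp 1 * L^2) * ((a:ℝ)/b) := by
          rw [hlamL]
          have heq : (Real.exp 1 * n / b) * ((a:ℝ)^2 * (2*L/n)^2)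
              = ((4 * Real.exp 1 * L^2) * ((a:ℝ)/b)) * ((a:ℝ)/n) := by
            field_simp
            ring
          rw [heq]
          have h16 : (a:ℝ)/n ≤ 1 := by rw [div_le_one hnRpos]; exact han
          calc ((4 * Real.exp 1 * L^2) * ((a:ℝ)/b)) * ((a:ℝ)/n)
              ≤ ((4 * Real.exp 1 * L^2) * ((a:ℝ)/b)) * 1 := by
                apply mul_le_mul_of_nonneg_left h16 (by positivity)
            _ = (4 * Real.exp 1 * L^2) * ((a:ℝ)/b) := by ring
        calc (n₂.choose b : ℝ) * ((((a:ℝ))^2)^b * pr^(2*b))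
            ≤ (Real.exp 1 * n / b)^b * ((((a:ℝ))^2)^b * lam^(2*b)) := by
              apply mul_le_mul step1 ?_ (by positivity) (by positivity)
              exact mul_le_mul_of_nonneg_left step2 (by positivity)
          _ = ((Real.exp 1 * n / b) * ((a:ℝ)^2 * lam^2))^b := by
              rw [mul_pow, mul_pow, pow_mul]
          _ ≤ ((4 * Real.exp 1 * L^2) * ((a:ℝ)/b))^b := by
              apply pow_le_pow_left₀ (by positivity) key
          _ = (4 * Real.exp 1 * L^2)^b * ((a:ℝ)/b)^b := by rw [mul_pow]
          _ ≤ (4 * Real.exp 1 * L^2)^a * Real.exp a := by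
              apply mul_le_mul
              · exact pow_le_pow_right₀ h4eL (by omega)
              · calc ((a:ℝ)/b)^b ≤ Real.exp ((a:ℝ) - b) := div_pow_le_exp _ b (by positivity) hbpos
                  _ ≤ Real.exp a := Real.exp_le_exp.mpr (by linarith)
              · positivity
              · positivity
    have hkill : (a:ℝ) * L / 2 ≤ lam * (M:ℝ) := by
      rw [hlamL, hMcast]
      have h1 : (n:ℝ)/4 ≤ (nl:ℝ) + 1 - a := by linarith
      have h2 : 2 * L / n * ((a:ℝ) * ((n:ℝ)/4)) ≤ 2 * L / n * ((a:ℝ) * ((nl:ℝ) + 1 - a)) := by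
        apply mul_le_mul_of_nonneg_left ?_ (by positivity)
        apply mul_le_mul_of_nonneg_left h1 (by positivity)
      have h3 : 2 * L / n * ((a:ℝ) * ((n:ℝ)/4)) = (a:ℝ) * L / 2 := by
        field_simp
        ring
      linarith
    have hexpmono : Real.exp (-(lam * (M:ℝ))) ≤ Real.exp (-((a:ℝ) * L / 2)) :=
      Real.exp_le_exp.mpr (by linarith)
    rw [hLHSeq]
    have hcombine : (n₁.choose a : ℝ) * ((n₂.choose b : ℝ) * ((((a:ℝ))^2)^b * pr^(2*b))) *
          ((1 - pr)^M)
        ≤ (Real.exp 1 * (16 * L^2))^a * ((4 * Real.exp 1 * L^2)^a * Real.exp a) *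
          Real.exp (-((a:ℝ) * L / 2)) := by
      apply mul_le_mul ?_ (hqM.trans hexpmono) (by positivity) (by positivity)
      exact mul_le_mul hB1 hB2 (by positivity) (by positivity)
    refine hcombine.trans ?_
    have hgroup : (Real.exp 1 * (16 * L^2))^a * ((4 * Real.exp 1 * L^2)^a * Real.exp a) *
          Real.exp (-((a:ℝ) * L / 2))
        = (64 * (Real.exp 1)^3 * L^4 * Real.exp (-(L/2)))^a := by
      have e2 : Real.exp (-((a:ℝ) * L / 2)) = (Real.exp (-(L/2)))^a := by
        rw [← Real.exp_nat_mul]; congr 1; ring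
      have e3 : Real.exp ((a:ℝ)) = (Real.exp 1)^a := by
        rw [← Real.exp_nat_mul]; congr 1; ring
      rw [e2, e3, ← mul_pow, ← mul_pow, ← mul_pow]
      congr 1
      ring
    rw [hgroup]
    have hnum : 64 * (Real.exp 1)^3 * L^4 * Real.exp (-(L/2)) ≤ Real.exp (-(Real.log n)/4) := by
      have hL4 : L^4 ≤ Real.exp (L/8 + 12) := by
        have h1 : L ≤ Real.exp (L/32 + 3) := le_exp_32 L (by linarith)
        calc L^4 ≤ (Real.exp (L/32 + 3))^4 := pow_le_pow_left₀ (by linarith) h1 4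
          _ = Real.exp ((4:ℕ) * (L/32 + 3)) := by rw [Real.exp_nat_mul]
          _ = Real.exp (L/8 + 12) := by congr 1; push_cast; ring
      have hE3 : (Real.exp 1)^3 = Real.exp 3 := by
        rw [← Real.exp_nat_mul]; norm_num
      calc 64 * (Real.exp 1)^3 * L^4 * Real.exp (-(L/2))
          ≤ Real.exp 5 * Real.exp 3 * Real.exp (L/8 + 12) * Real.exp (-(L/2)) := by
            rw [hE3]
            apply mul_le_mul_of_nonneg_right ?_ (by positivity)
            apply mul_le_mul ?_ hL4 (by positivity) (by positivity)
            exact mul_le_mul_of_nonneg_right sixtyfour_le_exp_five (by positivity)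
        _ = Real.exp (5 + 3 + (L/8 + 12) + (-(L/2))) := by
            rw [← Real.exp_add, ← Real.exp_add, ← Real.exp_add]
        _ ≤ Real.exp (-(Real.log n)/4) := by
            apply Real.exp_le_exp.mpr
            have hlogL : Real.log n ≤ L := by rw [hLdef]; linarith
            linarith
    calc (64 * (Real.exp 1)^3 * L^4 * Real.exp (-(L/2)))^a
        ≤ (Real.exp (-(Real.log n)/4))^a := pow_le_pow_left₀ (by positivity) hnum a
      _ ≤ (Real.exp (9 - c) + Real.exp (-(Real.log n)/4))^a :=
          pow_le_pow_left₀ (by positivity) htheta2 a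

end Analytic
section Assembly

open Real

lemma ofReal_inf_one (x : ℝ) : ENNReal.ofReal x ⊓ 1 = ENNReal.ofReal (min x 1) := by
  rcases le_total x 1 with h | h
  · rw [min_eq_left h, inf_eq_left.mpr (ENNReal.ofReal_le_one.mpr h)]
  · rw [min_eq_right h, inf_eq_right.mpr (ENNReal.one_le_ofReal.mpr h), ENNReal.ofReal_one]

lemma geom_sum_Icc_le (θ : ℝ) (h0 : 0 ≤ θ) (h2 : θ ≤ 1/2) (K : ℕ) :
    ∑ a ∈ Finset.Icc 1 K, θ^a ≤ 2*θ := by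
  have hrange : ∑ i ∈ Finset.range K, θ^i ≤ 2 := by
    have h := geom_sum_mul θ K
    have hS0 : 0 ≤ ∑ i ∈ Finset.range K, θ^i :=
      Finset.sum_nonneg fun i _ => pow_nonneg h0 i
    have hpow : 0 ≤ θ^K := pow_nonneg h0 K
    nlinarith [h]
  calc ∑ a ∈ Finset.Icc 1 K, θ^a = ∑ i ∈ Finset.range (K + 1 - 1), θ^(1 + i) := by
        rw [← Finset.Ico_add_one_right_eq_Icc, Finset.sum_Ico_eq_sum_range]
    _ = θ * ∑ i ∈ Finset.range K, θ^i := by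
        simp only [Nat.add_sub_cancel]
        rw [Finset.mul_sum]
        congr 1
        funext i
        rw [pow_add, pow_one]
    _ ≤ θ * 2 := mul_le_mul_of_nonneg_left hrange h0
    _ = 2*θ := by ring

lemma main_bound (n nL nR : ℕ) (cn : ℝ)
    (hc : 10 ≤ cn) (hlog : 200 ≤ Real.log n)
    (hL1 : (n:ℝ)/2 ≤ (nL:ℝ)) (hL2 : nL ≤ n) (hR : nR ≤ n) :
    bipartiteER nL nR (ENNReal.ofReal (2*(Real.log n + cn)/n) ⊓ 1) inf_le_right
      {G | HasRightSaturatedTwoMatching G}ᶜ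
      ≤ ENNReal.ofReal (8 * (Real.exp (9 - cn) + Real.exp (-(Real.log n)/4))) := by
  classical
  set pr : ℝ := min (2*(Real.log n + cn)/n) 1 with hprdef
  have hn0 : 0 < n := by
    by_contra h
    push_neg at h
    interval_cases n
    simp [Real.log_zero] at hlog; linarith
  have hnRpos : (0:ℝ) < n := by exact_mod_cast hn0
  have hnbig : (190:ℝ) ≤ n := by
    have h1 : Real.log n ≤ (n:ℝ) - 1 := Real.log_le_sub_one_of_pos hnRpos
    linarith
  have hlam0 : 0 ≤ 2*(Real.log n + cn)/n := by
    have : (0:ℝ) ≤ Real.log n + cn := by linarith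
    positivity
  have hpr0 : 0 ≤ pr := le_min hlam0 zero_le_one
  have hpr1 : pr ≤ 1 := min_le_right _ _
  have hple : ENNReal.ofReal pr ≤ 1 := ENNReal.ofReal_le_one.mpr hpr1
  have hnL0 : 0 < nL := by
    by_contra h
    push_neg at h
    interval_cases nL
    simp at hL1
    linarith
  have hn2nL : n ≤ 2 * nL := by
    have : (n:ℝ) ≤ 2 * nL := by linarith
    exact_mod_cast this
  -- rewrite the measure
  have hpeq : ENNReal.ofReal (2*(Real.log n + cn)/n) ⊓ 1 = ENNReal.ofReal pr :=
    ofReal_inf_one _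
  have hmeas : bipartiteER nL nR (ENNReal.ofReal (2*(Real.log n + cn)/n) ⊓ 1) inf_le_right
      = Measure.pi (fun _ : Fin nL × Fin nR => bern (ENNReal.ofReal pr) hple) := by
    unfold bipartiteER bern
    have hber : ∀ (p q : ENNReal) (hp : p.toNNReal ≤ 1) (hq : q.toNNReal ≤ 1), p = q →
        (PMF.bernoulli p.toNNReal hp).toMeasure = (PMF.bernoulli q.toNNReal hq).toMeasure := by
      rintro p q hp hq rfl; rfl
    congr 1
    funext x
    exact hber _ _ _ _ hpeq
  rw [hmeas]
  set μ := Measure.pi (fun _ : Fin nL × Fin nR => bern (ENNReal.ofReal pr) hple) with hμdef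
  set θ : ℝ := Real.exp (9 - cn) + Real.exp (-(Real.log n)/4) with hθdef
  have hθ0 : 0 ≤ θ := by positivity
  have hθhalf : θ ≤ 1/2 := by
    have e1 : Real.exp (9 - cn) ≤ Real.exp (-1) := Real.exp_le_exp.mpr (by linarith)
    have e2 : Real.exp (-(Real.log n)/4) ≤ Real.exp (-3) := Real.exp_le_exp.mpr (by linarith)
    have h1 : Real.exp (-1) ≤ 0.37 := by
      rw [Real.exp_neg]
      rw [inv_le_iff_one_le_mul₀ (Real.exp_pos 1)]
      nlinarith [Real.exp_one_gt_d9]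
    have h3 : Real.exp (-3) ≤ 0.06 := by
      rw [Real.exp_neg]
      rw [inv_le_iff_one_le_mul₀ (Real.exp_pos 3)]
      have hh : (2.7182818283:ℝ)^(3:ℕ) ≤ (Real.exp 1)^(3:ℕ) :=
        pow_le_pow_left₀ (by norm_num) (le_of_lt Real.exp_one_gt_d9) 3
      have hh2 : (Real.exp 1)^(3:ℕ) = Real.exp 3 := by
        rw [← Real.exp_nat_mul]; norm_num
      nlinarith [hh, hh2]
    rw [hθdef]
    linarith
  -- per-half bound
  have hhalf : ∀ R : Finset (Fin nR), R.card ≤ nL →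
      μ {G | ¬ HasSatM R G} ≤ ENNReal.ofReal (4 * θ) := by
    intro R hm
    set K := nL/2 + 1 with hKdef
    have hincl : {G : Fin nL × Fin nR → Bool | ¬ HasSatM R G} ⊆
        ⋃ a ∈ Finset.Icc 1 K,
          ({G | RightWitness R a G} ∪ {G | LeftWitness R a G}) := by
      intro G hG
      rcases master_struct hnL0 hm hG with ⟨a, ha1, haK, hw⟩ | ⟨a, ha1, haK, hw⟩
      · exact Set.mem_biUnion (Finset.mem_Icc.mpr ⟨ha1, haK⟩) (Or.inl hw)
      · exact Set.mem_biUnion (Finset.mem_Icc.mpr ⟨ha1, haK⟩) (Or.inr hw)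
    have hperA : ∀ a ∈ Finset.Icc 1 K,
        μ {G | RightWitness R a G} + μ {G | LeftWitness R a G}
          ≤ ENNReal.ofReal (θ^a) + ENNReal.ofReal (θ^a) := by
      intro a haIcc
      obtain ⟨ha1, haK⟩ := Finset.mem_Icc.mp haIcc
      have hconv : ∀ (C : ℕ) (e1 e2 : ℕ),
          (C : ENNReal) * ((ENNReal.ofReal pr)^e1 * (1 - ENNReal.ofReal pr)^e2)
            = ENNReal.ofReal ((C:ℝ) * (pr^e1 * (1-pr)^e2)) := by
        intro C e1 e2
        have hq : (1 : ENNReal) - ENNReal.ofReal pr = ENNReal.ofReal (1 - pr) := by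
          rw [ENNReal.ofReal_sub 1 hpr0, ENNReal.ofReal_one]
        rw [hq, ← ENNReal.ofReal_pow hpr0, ← ENNReal.ofReal_pow (by linarith),
          ← ENNReal.ofReal_mul (by positivity), ← ENNReal.ofReal_natCast C,
          ← ENNReal.ofReal_mul (by positivity)]
      have hbR : μ {G | RightWitness R a G} ≤ ENNReal.ofReal (θ^a) := by
        calc μ {G | RightWitness R a G}
            ≤ ((R.card.choose a * (nL.choose (a-1)) * (a^2)^(a-1) : ℕ) : ENNReal) *
              ((ENNReal.ofReal pr)^(2*(a-1)) * (1 - ENNReal.ofReal pr)^(a * (nL + 1 - a))) :=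
              right_union_bound hple R a ha1
          _ = ENNReal.ofReal (((R.card.choose a * (nL.choose (a-1)) * (a^2)^(a-1) : ℕ):ℝ) *
              (pr^(2*(a-1)) * (1-pr)^(a * (nL + 1 - a)))) := hconv _ _ _
          _ ≤ ENNReal.ofReal (θ^a) := by
              apply ENNReal.ofReal_le_ofReal
              have heq : ((R.card.choose a * (nL.choose (a-1)) * (a^2)^(a-1) : ℕ):ℝ) *
                  (pr^(2*(a-1)) * (1-pr)^(a * (nL + 1 - a)))
                  = (R.card.choose a : ℝ) * (nL.choose (a-1) : ℝ) * (((a:ℝ))^2)^(a-1) *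
                    pr^(2*(a-1)) * (1-pr)^(a * (nL + 1 - a)) := by
                push_cast
                ring
              rw [heq]
              exact analytic_bound n nL R.card nL a (a-1) cn hc hlog hL1 hL2
                (le_trans (by simpa using Finset.card_le_card (Finset.subset_univ R)) hR)
                hL2 ha1 haK (by omega)
      have hbL : μ {G | LeftWitness R a G} ≤ ENNReal.ofReal (θ^a) := by
        calc μ {G | LeftWitness R a G}
            ≤ ((nL.choose a * (R.card.choose (R.card + a - (nL+1))) *
                (a^2)^(R.card + a - (nL+1)) : ℕ) : ENNReal) *
              ((ENNReal.ofReal pr)^(2*(R.card + a - (nL+1))) *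
                (1 - ENNReal.ofReal pr)^(a * (nL + 1 - a))) :=
              left_union_bound hple R a ha1
          _ = ENNReal.ofReal (((nL.choose a * (R.card.choose (R.card + a - (nL+1))) *
                (a^2)^(R.card + a - (nL+1)) : ℕ):ℝ) *
              (pr^(2*(R.card + a - (nL+1))) * (1-pr)^(a * (nL + 1 - a)))) := hconv _ _ _
          _ ≤ ENNReal.ofReal (θ^a) := by
              apply ENNReal.ofReal_le_ofReal
              have heq : ((nL.choose a * (R.card.choose (R.card + a - (nL+1))) *
                  (a^2)^(R.card + a - (nL+1)) : ℕ):ℝ) *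
                  (pr^(2*(R.card + a - (nL+1))) * (1-pr)^(a * (nL + 1 - a)))
                  = (nL.choose a : ℝ) * (R.card.choose (R.card + a - (nL+1)) : ℝ) *
                    (((a:ℝ))^2)^(R.card + a - (nL+1)) *
                    pr^(2*(R.card + a - (nL+1))) * (1-pr)^(a * (nL + 1 - a)) := by
                push_cast
                ring
              rw [heq]
              exact analytic_bound n nL nL R.card a (R.card + a - (nL+1)) cn hc hlog hL1 hL2
                hL2 (le_trans (by simpa using Finset.card_le_card (Finset.subset_univ R)) hR)
                ha1 haK (by omega)
      exact add_le_add hbR hbL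
    calc μ {G | ¬ HasSatM R G}
        ≤ μ (⋃ a ∈ Finset.Icc 1 K,
            ({G | RightWitness R a G} ∪ {G | LeftWitness R a G})) := measure_mono hincl
      _ ≤ ∑ a ∈ Finset.Icc 1 K,
            μ ({G | RightWitness R a G} ∪ {G | LeftWitness R a G}) :=
          measure_biUnion_finset_le _ _
      _ ≤ ∑ a ∈ Finset.Icc 1 K, (μ {G | RightWitness R a G} + μ {G | LeftWitness R a G}) :=
          Finset.sum_le_sum fun a _ => measure_union_le _ _
      _ ≤ ∑ a ∈ Finset.Icc 1 K, (ENNReal.ofReal (θ^a) + ENNReal.ofReal (θ^a)) :=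
          Finset.sum_le_sum hperA
      _ = ENNReal.ofReal (∑ a ∈ Finset.Icc 1 K, (θ^a + θ^a)) := by
          rw [ENNReal.ofReal_sum_of_nonneg (fun a _ => by positivity)]
          congr 1
          funext a
          rw [ENNReal.ofReal_add (by positivity) (by positivity)]
      _ ≤ ENNReal.ofReal (4 * θ) := by
          apply ENNReal.ofReal_le_ofReal
          have h1 : ∑ a ∈ Finset.Icc 1 K, (θ^a + θ^a) = 2 * ∑ a ∈ Finset.Icc 1 K, θ^a := by
            rw [Finset.mul_sum]
            congr 1
            funext a
            ring
          rw [h1]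
          have := geom_sum_Icc_le θ hθ0 hθhalf K
          linarith
  -- the two halves
  set R1 : Finset (Fin nR) := Finset.univ.filter (fun r => (r:ℕ) < (nR+1)/2) with hR1def
  have hcard1 : R1.card ≤ (nR+1)/2 := by
    have h : R1.card ≤ (Finset.range ((nR+1)/2)).card := by
      refine Finset.card_le_card_of_injOn (fun r => (r:ℕ)) ?_ ?_
      · intro r hr
        simp only [Finset.mem_coe, hR1def, Finset.mem_filter] at hr
        exact Finset.mem_range.mpr hr.2
      · intro x _ y _ h
        exact Fin.val_injective h
    simpa using h
  have hcard2 : R1ᶜ.card ≤ nR - (nR+1)/2 := by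
    have h : R1ᶜ.card ≤ (Finset.range (nR - (nR+1)/2)).card := by
      refine Finset.card_le_card_of_injOn (fun r => (r:ℕ) - (nR+1)/2) ?_ ?_
      · intro r hr
        simp only [Finset.mem_coe, Finset.mem_compl, hR1def, Finset.mem_filter, Finset.mem_univ, true_and,
          not_lt] at hr
        have hrlt : (r:ℕ) < nR := r.2
        refine Finset.mem_range.mpr ?_
        show (r:ℕ) - (nR+1)/2 < nR - (nR+1)/2
        omega
      · intro x hx y hy h
        simp only [Finset.mem_coe, Finset.mem_compl, hR1def, Finset.mem_filter, Finset.mem_univ,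
          true_and, not_lt] at hx hy
        have h' : (x:ℕ) - (nR+1)/2 = (y:ℕ) - (nR+1)/2 := h
        have : (x:ℕ) = (y:ℕ) := by omega
        exact Fin.val_injective this
    simpa using h
  have hm1 : R1.card ≤ nL := by omega
  have hm2 : R1ᶜ.card ≤ nL := by omega
  have hdecomp : {G : Fin nL × Fin nR → Bool | HasRightSaturatedTwoMatching G}ᶜ ⊆
      {G | ¬ HasSatM R1 G} ∪ {G | ¬ HasSatM R1ᶜ G} := by
    intro G hG
    by_contra hcon
    simp only [Set.mem_union, Set.mem_setOf_eq, not_or, not_not] at hcon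
    exact hG (combine_matchings hcon.1 hcon.2)
  calc μ {G : Fin nL × Fin nR → Bool | HasRightSaturatedTwoMatching G}ᶜ
      ≤ μ ({G | ¬ HasSatM R1 G} ∪ {G | ¬ HasSatM R1ᶜ G}) := measure_mono hdecomp
    _ ≤ μ {G | ¬ HasSatM R1 G} + μ {G | ¬ HasSatM R1ᶜ G} := measure_union_le _ _
    _ ≤ ENNReal.ofReal (4 * θ) + ENNReal.ofReal (4 * θ) :=
        add_le_add (hhalf R1 hm1) (hhalf R1ᶜ hm2)
    _ = ENNReal.ofReal (8 * θ) := by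
        rw [← ENNReal.ofReal_add (by positivity) (by positivity)]
        congr 1
        ring

end Assembly

/-- If `n/2 ≤ n_L ≤ n`, `n_R ≤ n`, and `p = 2(log n + c n)/n` (truncated to at most `1`)
with `c n → ∞`, then `G(n_L, n_R, p)` contains a right-saturated 2-matching with high
probability. -/
theorem er_right_saturated_two_matching_whp (c : ℕ → ℝ) (hc : Tendsto c atTop atTop)
    (nL nR : ℕ → ℕ)
    (hL_lb : ∀ n : ℕ, (n : ℝ) / 2 ≤ (nL n : ℝ)) (hL_ub : ∀ n : ℕ, nL n ≤ n)
    (hR : ∀ n : ℕ, nR n ≤ n) :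
    Tendsto
      (fun n =>
        bipartiteER (nL n) (nR n)
          (ENNReal.ofReal (2 * (Real.log n + c n) / n) ⊓ 1) inf_le_right
          {G | HasRightSaturatedTwoMatching G})
      atTop (nhds 1) := by
  set θ : ℕ → ℝ := fun n => Real.exp (9 - c n) + Real.exp (-(Real.log n)/4) with hθdef
  set μf : (n : ℕ) → ENNReal := fun n =>
    bipartiteER (nL n) (nR n)
      (ENNReal.ofReal (2 * (Real.log n + c n) / n) ⊓ 1) inf_le_right
      {G | HasRightSaturatedTwoMatching G} with hμfdef
  have h10 : ∀ᶠ n in atTop, 10 ≤ c n := hc.eventually_ge_atTop 10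
  have hlogev : ∀ᶠ n : ℕ in atTop, 200 ≤ Real.log n :=
    (Real.tendsto_log_atTop.comp tendsto_natCast_atTop_atTop).eventually_ge_atTop 200
  have hupper : ∀ᶠ n in atTop, μf n ≤ 1 := by
    apply Filter.Eventually.of_forall
    intro n
    have : IsProbabilityMeasure (bipartiteER (nL n) (nR n)
        (ENNReal.ofReal (2 * (Real.log n + c n) / n) ⊓ 1) inf_le_right) := by
      unfold bipartiteER
      infer_instance
    exact prob_le_one
  have hkey : ∀ᶠ n in atTop, 1 - ENNReal.ofReal (8 * θ n) ≤ μf n := by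
    filter_upwards [h10, hlogev] with n h1 h2
    have hbound := main_bound n (nL n) (nR n) (c n) h1 h2 (hL_lb n) (hL_ub n) (hR n)
    set ν := bipartiteER (nL n) (nR n)
      (ENNReal.ofReal (2 * (Real.log n + c n) / n) ⊓ 1) inf_le_right with hνdef
    have : IsProbabilityMeasure ν := by
      rw [hνdef]; unfold bipartiteER; infer_instance
    have hms : MeasurableSet {G : Fin (nL n) × Fin (nR n) → Bool |
        HasRightSaturatedTwoMatching G} := (Set.toFinite _).measurableSet
    have hcompl : ν {G | HasRightSaturatedTwoMatching G}ᶜ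
        = 1 - ν {G | HasRightSaturatedTwoMatching G} := prob_compl_eq_one_sub hms
    rw [hcompl] at hbound
    have h3 : (1:ENNReal) ≤ ENNReal.ofReal (8 * θ n) + ν {G | HasRightSaturatedTwoMatching G} :=
      tsub_le_iff_right.mp hbound
    exact tsub_le_iff_right.mpr (by rwa [add_comm] at h3)
  have ht1 : Tendsto (fun n => Real.exp (9 - c n)) atTop (nhds 0) := by
    apply Real.tendsto_exp_atBot.comp
    apply Filter.tendsto_atBot_add_const_left _ 9
    exact tendsto_neg_atTop_atBot.comp hc
  have ht2 : Tendsto (fun n : ℕ => Real.exp (-(Real.log n)/4)) atTop (nhds 0) := by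
    apply Real.tendsto_exp_atBot.comp
    apply Filter.Tendsto.atBot_div_const (by norm_num : (0:ℝ) < 4)
    exact tendsto_neg_atTop_atBot.comp (Real.tendsto_log_atTop.comp tendsto_natCast_atTop_atTop)
  have hθ0 : Tendsto (fun n => 8 * θ n) atTop (nhds 0) := by
    have := (ht1.add ht2).const_mul (8:ℝ)
    simpa using this
  have hE : Tendsto (fun n => ENNReal.ofReal (8 * θ n)) atTop (nhds 0) := by
    have := ENNReal.tendsto_ofReal hθ0
    simpa using this
  have hlower : Tendsto (fun n => 1 - ENNReal.ofReal (8 * θ n)) atTop (nhds 1) := by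
    have h := ENNReal.Tendsto.sub (tendsto_const_nhds (x := (1:ENNReal)) (f := atTop)) hE
      (Or.inl ENNReal.one_ne_top)
    simpa using h
  exact tendsto_of_tendsto_of_tendsto_of_le_of_le' hlower tendsto_const_nhds hkey hupper

end All
end
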